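/- arXiv:2304.13200 — 2 statements merged into one kernel-verified Lean document; each statement's English description precedes it below -/
import Mathlib

section
/- The optimal value of the following semidefinite program equals 3/4: maximize ⟨τ, Q⟩ over density matrices τ on Y ⊗ A ⊗ G = ℂ² ⊗ ℂ³ ⊗ ℂ², subject to Tr_G(τ) = Tr_B(|ψ⟩⟨ψ|), where |ψ⟩ = Σ_{y∈{0,1}} (1/√2)|y⟩_Y ⊗ |φ_y⟩_{A⊗B} ∈ ℂ² ⊗ ℂ³ ⊗ ℂ³ and Q = Σ_{y∈{0,1}} |y⟩⟨y|_Y ⊗ 1_A ⊗ |y⟩⟨y|_G. (This is the optimal cheating probability of Bob in the qutrit bit-commitment protocol: his best probability of guessing Alice's committed bit after receiving qutrit B.) -/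
/-! STATEMENT 1: Bob's optimal cheating probability in the qutrit bit-commitment protocol equals 3/4. -/

open Matrix
open scoped Matrix BigOperators ComplexOrder

noncomputable section

/-- Square matrices over ℂ indexed by `α`. -/
abbrev Mat (α : Type) : Type := Matrix α α ℂ

/-- A density matrix: positive semidefinite with unit trace. -/
def IsDensity {α : Type} [Fintype α] [DecidableEq α] (ρ : Mat α) : Prop :=
  ρ.PosSemidef ∧ ρ.trace = 1

/-- Hilbert–Schmidt inner product ⟨P, Q⟩ = Tr(P† Q). -/
def hs {α : Type} [Fintype α] (P Q : Mat α) : ℂ := (Pᴴ * Q).trace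

/-- Outer product |v⟩⟨v|. -/
def outer {α : Type} (v : α → ℂ) : Mat α := fun i j => v i * star (v j)

/-- Standard basis vector |i⟩. -/
def ket {α : Type} [DecidableEq α] (i : α) : α → ℂ := fun j => if j = i then 1 else 0

/-- The embedding of Fin 2 into Fin 3. -/
def f23 (y : Fin 2) : Fin 3 := ⟨y.val, by omega⟩

/-- |φ_y⟩ = (|yy⟩ + |22⟩)/√2 ∈ ℂ³ ⊗ ℂ³. -/
def phi (y : Fin 2) : Fin 3 × Fin 3 → ℂ :=
  fun p => (ket (f23 y, f23 y) p + ket ((2 : Fin 3), (2 : Fin 3)) p) / (Real.sqrt 2 : ℂ)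

/-- Partial trace over the first tensor factor. -/
def ptrA {α β : Type} [Fintype α] (ρ : Mat (α × β)) : Mat β :=
  fun b b' => ∑ a, ρ (a, b) (a, b')

/-- |ψ⟩ = Σ_y (1/√2)|y⟩_Y ⊗ |φ_y⟩_{A⊗B}. -/
def psiBC : Fin 2 × Fin 3 × Fin 3 → ℂ :=
  fun p => phi p.1 (p.2.1, p.2.2) / (Real.sqrt 2 : ℂ)

/-- Partial trace over B, the last qutrit factor of Y ⊗ A ⊗ B. -/
def trB_psi (ρ : Mat (Fin 2 × Fin 3 × Fin 3)) : Mat (Fin 2 × Fin 3) :=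
  fun p q => ∑ b, ρ (p.1, p.2, b) (q.1, q.2, b)

/-- Partial trace over G, the last factor of Y ⊗ A ⊗ G. -/
def trG (τ : Mat (Fin 2 × Fin 3 × Fin 2)) : Mat (Fin 2 × Fin 3) :=
  fun p q => ∑ g, τ (p.1, p.2, g) (q.1, q.2, g)

/-- Q = Σ_y |y⟩⟨y|_Y ⊗ 1_A ⊗ |y⟩⟨y|_G. -/
def Qbc : Mat (Fin 2 × Fin 3 × Fin 2) := fun p q =>
  ∑ y : Fin 2, ket y p.1 * star (ket y q.1) *
    (if p.2.1 = q.2.1 then 1 else 0) * (ket y p.2.2 * star (ket y q.2.2))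


/-! ### Auxiliary lemmas -/

lemma sqrt2_mul_self : (Real.sqrt 2 : ℂ) * (Real.sqrt 2 : ℂ) = 2 := by
  rw [← Complex.ofReal_mul, Real.mul_self_sqrt (by norm_num)]; norm_num

lemma psi_eq : psiBC = fun p =>
    if p = (0,0,0) ∨ p = (0,2,2) ∨ p = (1,1,1) ∨ p = (1,2,2) then (1/2 : ℂ) else 0 := by
  have h2 := sqrt2_mul_self
  funext ⟨y, a, b⟩
  fin_cases y <;> fin_cases a <;> fin_cases b <;>
    simp [psiBC, phi, ket, f23, Prod.ext_iff] <;>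
    rw [div_eq_mul_inv, ← mul_inv, h2]

lemma rho_eq : trB_psi (outer psiBC) = fun p q =>
    if (p.2 = f23 p.1 ∧ q.2 = f23 q.1 ∧ p.1 = q.1) ∨ (p.2 = 2 ∧ q.2 = 2)
    then (1/4 : ℂ) else 0 := by
  funext ⟨y, a⟩ ⟨y', a'⟩
  fin_cases y <;> fin_cases y' <;> fin_cases a <;> fin_cases a' <;>
    simp [trB_psi, outer, psi_eq, f23, Fin.sum_univ_succ, Prod.ext_iff, Complex.ext_iff] <;>
    norm_num

lemma hs_Qbc (τ : Mat (Fin 2 × Fin 3 × Fin 2)) : hs τ Qbc =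
    star (τ (0,0,0) (0,0,0)) + star (τ (0,1,0) (0,1,0)) + star (τ (0,2,0) (0,2,0)) +
    star (τ (1,0,1) (1,0,1)) + star (τ (1,1,1) (1,1,1)) + star (τ (1,2,1) (1,2,1)) := by
  simp [hs, Matrix.trace, Matrix.mul_apply, Matrix.conjTranspose_apply, Qbc, ket,
    Fintype.sum_prod_type, Fin.sum_univ_succ]
  ring

/-- positivity of 2x2 principal quadratic forms of a PSD matrix, real coefficients -/
lemma quad2 {ι : Type} [Fintype ι] [DecidableEq ι] {τ : Mat ι} (hτ : τ.PosSemidef)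
    (p q : ι) (α β : ℝ) :
    0 ≤ α^2 * (τ p p).re + 2*α*β*(τ p q).re + β^2 * (τ q q).re := by
  have h := hτ.dotProduct_mulVec_nonneg ((Pi.single p (α:ℂ) : ι → ℂ) + (Pi.single q (β:ℂ) : ι → ℂ))
  have hx : star ((Pi.single p (α:ℂ) : ι → ℂ) + (Pi.single q (β:ℂ) : ι → ℂ))
      = (Pi.single p (α:ℂ) : ι → ℂ) + (Pi.single q (β:ℂ) : ι → ℂ) := by
    funext i
    simp [Pi.single_apply, apply_ite (star : ℂ → ℂ)]
  rw [hx, mulVec_add, mulVec_single, mulVec_single, add_dotProduct,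
    single_dotProduct, single_dotProduct] at h
  simp only [Pi.add_apply, Pi.smul_apply, op_smul_eq_mul, col_apply] at h
  rw [Complex.le_def] at h
  have hqp : τ q p = star (τ p q) := (hτ.1.apply q p).symm
  rw [hqp] at h
  have hre : ((α:ℂ) * (τ p p * (α:ℂ) + τ p q * (β:ℂ)) +
      (β:ℂ) * (star (τ p q) * (α:ℂ) + τ q q * (β:ℂ))).re
      = α^2 * (τ p p).re + 2*α*β*(τ p q).re + β^2 * (τ q q).re := by
    simp [Complex.add_re, Complex.mul_re, Complex.ofReal_re, Complex.ofReal_im,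
      Complex.star_def, Complex.conj_re, Complex.conj_im]
    ring
  rw [hre] at h
  simpa using h.1

/-- diagonal entries of a PSD matrix -/
lemma diag_psd {ι : Type} [Fintype ι] [DecidableEq ι] {τ : Mat ι} (hτ : τ.PosSemidef)
    (p : ι) : 0 ≤ (τ p p).re ∧ (τ p p).im = 0 := by
  have h := hτ.dotProduct_mulVec_nonneg (Pi.single p (1:ℂ) : ι → ℂ)
  have hx : star (Pi.single p (1:ℂ) : ι → ℂ) = (Pi.single p (1:ℂ) : ι → ℂ) := by
    funext i; simp [Pi.single_apply, apply_ite (star : ℂ → ℂ)]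
  rw [hx, mulVec_single, single_dotProduct] at h
  simp only [mul_one, one_mul] at h
  rw [Complex.le_def] at h
  exact ⟨by simpa using h.1, by simpa using h.2.symm⟩

/-- key real fact for the a = 2 block -/
lemma real_block (s t r : ℝ) (hs : 0 ≤ s) (ht : 0 ≤ t)
    (hq : ∀ α β : ℝ, 0 ≤ α^2*s + 2*α*β*r + β^2*t) (he : s + t = 2*r) : s = t := by
  have h1 := hq t (-r)
  have h2 := hq r (-s)
  have hr : 0 ≤ r := by linarith
  rcases eq_or_lt_of_le hr with h0 | h0
  · linarith
  · have hst : r^2 ≤ s * t := by nlinarith [h1, h2, h0]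
    have hsq : (s - t)^2 ≤ 0 := by nlinarith [hst]
    have h4 : (s - t)^2 = 0 := le_antisymm hsq (sq_nonneg _)
    have h5 := pow_eq_zero_iff (n := 2) (by norm_num) |>.mp h4
    linarith [sub_eq_zero.mp h5]

/-- the optimal cheating strategy -/
def u1 : Fin 2 × Fin 3 × Fin 2 → ℂ := fun p => ket ((0:Fin 2),(0:Fin 3),(0:Fin 2)) p / 2
def u2 : Fin 2 × Fin 3 × Fin 2 → ℂ := fun p => ket ((1:Fin 2),(1:Fin 3),(1:Fin 2)) p / 2
def u3 : Fin 2 × Fin 3 × Fin 2 → ℂ := fun p =>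
  (ket ((0:Fin 2),(2:Fin 3),(0:Fin 2)) p + ket ((1:Fin 2),(2:Fin 3),(0:Fin 2)) p) / 2
def tau0 : Mat (Fin 2 × Fin 3 × Fin 2) := outer u1 + outer u2 + outer u3

lemma outer_psd {ι : Type} [Fintype ι] (v : ι → ℂ) : (outer v).PosSemidef := by
  rw [posSemidef_iff_dotProduct_mulVec]
  constructor
  · ext i j
    simp [outer, Matrix.conjTranspose_apply, mul_comm]
  · intro x
    have : star x ⬝ᵥ (outer v) *ᵥ x = star (star v ⬝ᵥ x) * (star v ⬝ᵥ x) := by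
      simp only [dotProduct, mulVec, outer, Pi.star_apply, star_sum, star_mul', star_star,
        Finset.mul_sum, Finset.sum_mul]
      rw [Finset.sum_comm]
      apply Finset.sum_congr rfl; intro i _
      apply Finset.sum_congr rfl; intro j _
      ring
    rw [this]
    exact star_mul_self_nonneg _

lemma psd_add {ι : Type} [Fintype ι] {A B : Mat ι} (hA : A.PosSemidef) (hB : B.PosSemidef) :
    (A + B).PosSemidef := by
  refine .of_dotProduct_mulVec_nonneg (hA.1.add hB.1) fun x => ?_
  rw [add_mulVec, dotProduct_add]
  exact add_nonneg (hA.dotProduct_mulVec_nonneg x) (hB.dotProduct_mulVec_nonneg x)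

lemma tau0_psd : tau0.PosSemidef :=
  psd_add (psd_add (outer_psd u1) (outer_psd u2)) (outer_psd u3)

set_option maxHeartbeats 1000000 in
theorem bit_commitment_cheating_Bob :
    IsGreatest
      {x : ℝ | ∃ τ : Mat (Fin 2 × Fin 3 × Fin 2),
        IsDensity τ ∧ trG τ = trB_psi (outer psiBC) ∧
        x = (hs τ Qbc).re}
      (3/4) := by
  constructor
  · -- membership: tau0 achieves 3/4
    refine ⟨tau0, ⟨tau0_psd, ?_⟩, ?_, ?_⟩
    · simp [tau0, Matrix.trace, Matrix.add_apply, Matrix.diag_apply, Fintype.sum_prod_type, Fin.sum_univ_succ, outer,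
        u1, u2, u3, ket]
      norm_num
    · rw [rho_eq]
      funext ⟨y, a⟩ ⟨y', a'⟩
      fin_cases y <;> fin_cases y' <;> fin_cases a <;> fin_cases a' <;>
        simp [trG, tau0, Matrix.add_apply, outer, u1, u2, u3, ket, f23, Fin.sum_univ_succ,
          Prod.ext_iff, Complex.ext_iff] <;> norm_num
    · rw [hs_Qbc]
      simp [tau0, Matrix.add_apply, outer, u1, u2, u3, ket, Prod.ext_iff]
      norm_num
  · -- upper bound
    rintro x ⟨τ, ⟨hpsd, _⟩, hc, rfl⟩
    have key : ∀ p q : Fin 2 × Fin 3,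
        τ (p.1, p.2, 0) (q.1, q.2, 0) + τ (p.1, p.2, 1) (q.1, q.2, 1)
          = (if (p.2 = f23 p.1 ∧ q.2 = f23 q.1 ∧ p.1 = q.1) ∨ (p.2 = 2 ∧ q.2 = 2)
              then (1/4 : ℂ) else 0) := by
      intro p q
      have h := congrFun (congrFun hc p) q
      rw [rho_eq] at h
      simpa [trG, Fin.sum_univ_two] using h
    -- real parts of diagonal constraints
    have re_of : ∀ (p q : Fin 2 × Fin 3 × Fin 2) (p' q' : Fin 2 × Fin 3 × Fin 2) (c : ℝ),
        τ p q + τ p' q' = (c : ℂ) → (τ p q).re + (τ p' q').re = c := by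
      intro p q p' q' c h
      have := congrArg Complex.re h
      simpa using this
    have c1 := re_of _ _ _ _ (1/4) (by push_cast; exact key (0,0) (0,0) |>.trans (by norm_num [f23, Fin.ext_iff]))
    have c2 := re_of _ _ _ _ 0 (by push_cast; exact key (0,1) (0,1) |>.trans (by norm_num [f23, Fin.ext_iff]))
    have c3 := re_of _ _ _ _ 0 (by push_cast; exact key (1,0) (1,0) |>.trans (by norm_num [f23, Fin.ext_iff]))
    have c4 := re_of _ _ _ _ (1/4) (by push_cast; exact key (1,1) (1,1) |>.trans (by norm_num [f23, Fin.ext_iff]))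
    have c5 := re_of _ _ _ _ (1/4) (by push_cast; exact key (0,2) (0,2) |>.trans (by norm_num [f23, Fin.ext_iff]))
    have c6 := re_of _ _ _ _ (1/4) (by push_cast; exact key (1,2) (1,2) |>.trans (by norm_num [f23, Fin.ext_iff]))
    have c7 := re_of _ _ _ _ (1/4) (by push_cast; exact key (0,2) (1,2) |>.trans (by norm_num [f23, Fin.ext_iff]))
    -- nonnegativity of diagonal entries
    have d : ∀ p : Fin 2 × Fin 3 × Fin 2, 0 ≤ (τ p p).re := fun p => (diag_psd hpsd p).1
    -- the a = 2 block
    have q0 := quad2 hpsd ((0:Fin 2),(2:Fin 3),(0:Fin 2)) ((1:Fin 2),(2:Fin 3),(0:Fin 2)) 1 (-1)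
    have q1 := quad2 hpsd ((0:Fin 2),(2:Fin 3),(1:Fin 2)) ((1:Fin 2),(2:Fin 3),(1:Fin 2)) 1 (-1)
    have hsum0 : (τ ((0:Fin 2),(2:Fin 3),(0:Fin 2)) ((0:Fin 2),(2:Fin 3),(0:Fin 2))).re
        + (τ ((1:Fin 2),(2:Fin 3),(0:Fin 2)) ((1:Fin 2),(2:Fin 3),(0:Fin 2))).re
        = 2 * (τ ((0:Fin 2),(2:Fin 3),(0:Fin 2)) ((1:Fin 2),(2:Fin 3),(0:Fin 2))).re := by
      nlinarith [q0, q1, c5, c6, c7]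
    have hsum1 : (τ ((0:Fin 2),(2:Fin 3),(1:Fin 2)) ((0:Fin 2),(2:Fin 3),(1:Fin 2))).re
        + (τ ((1:Fin 2),(2:Fin 3),(1:Fin 2)) ((1:Fin 2),(2:Fin 3),(1:Fin 2))).re
        = 2 * (τ ((0:Fin 2),(2:Fin 3),(1:Fin 2)) ((1:Fin 2),(2:Fin 3),(1:Fin 2))).re := by
      nlinarith [q0, q1, c5, c6, c7]
    have e0 := real_block _ _ _ (d _) (d _)
      (fun α β => quad2 hpsd ((0:Fin 2),(2:Fin 3),(0:Fin 2)) ((1:Fin 2),(2:Fin 3),(0:Fin 2)) α β) hsum0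
    have e1 := real_block _ _ _ (d _) (d _)
      (fun α β => quad2 hpsd ((0:Fin 2),(2:Fin 3),(1:Fin 2)) ((1:Fin 2),(2:Fin 3),(1:Fin 2)) α β) hsum1
    -- conclude
    rw [hs_Qbc]
    simp only [Complex.add_re, Complex.star_def, Complex.conj_re]
    linarith [d ((0:Fin 2),(0:Fin 3),(1:Fin 2)), d ((1:Fin 2),(1:Fin 3),(0:Fin 2)),
      d ((0:Fin 2),(1:Fin 3),(1:Fin 2)), d ((1:Fin 2),(0:Fin 3),(0:Fin 2)), c1, c2, c3, c4, c5, c6, e0, e1]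

end
end

section
/- Consider the semidefinite program combining Alice's cheating SDPs for bit commitment, weak coin flipping, and oblivious transfer with a shared first message: maximize (1/3)·Σ_{y∈{0,1}}(1/2)⟨φ_y|σ_y^{BC}|φ_y⟩ + (1/3)·[(1/2)⟨σ₀^{WCF},P₀⟩ + (1/2)⟨σ₁^{WCF},P₁⟩] + (1/3)·⟨σ^{OT}, P_accept⟩ over density matrices σ₀^{BC}, σ₁^{BC} on ℂ³⊗ℂ³, σ₀^{WCF}, σ₁^{WCF} on ℂ²⊗(ℂ³)^{⊗4}, σ^{OT} on (ℂ²)^{⊗4}, and σ_B on ℂ³, subject to: Tr_A(σ₀^{BC}) = Tr_A(σ₁^{BC}) = σ_B; Tr_{Y,A₀,A₁}(σ₀^{WCF}) = Tr_{Y,A₀,A₁}(σ₁^{WCF}) with Tr_{B₁} of this common marginal equal to σ_B; and Tr_{G₀,G₁}(σ^{OT}) = Tr_B(U₂(|ψ⟩⟨ψ| ⊗ σ_B)U₂†), where the operators P₀, P₁, P_accept, U₂ and the state |ψ⟩ are as in the individual SDPs (P₀ = Σ_y |y⟩⟨y|⊗|φ_y⟩⟨φ_y|_{A₀B₀}⊗1_{A₁}⊗|2⟩⟨2|_{B₁},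 P₁ = Σ_y |y⟩⟨y|⊗1_{A₀}⊗|2⟩⟨2|_{B₀}⊗|φ_y⟩⟨φ_y|_{A₁B₁}, |ψ⟩ = (1/2)Σ_{x₀,x₁}|x₀x₁⟩, U₂ = Σ_{x₀,x₁}|x₀x₁⟩⟨x₀x₁|⊗diag((−1)^{x₀},(−1)^{x₁},1), P_accept = Σ_{x₀,x₁}|x₀x₁⟩⟨x₀x₁|⊗|x₀x₁⟩⟨x₀x₁|). Its optimal value v satisfies 0.7177 ≤ v ≤ 0.7178; in particular v < 3/4. -/
/-! STATEMENT 10: Alice's optimal cheating probability in the three-way stochastic switch protocol (bit commitment / weak coin flipping / oblivious transfer) lies in [0.7177, 0.7178]; in particular it is strictly below 3/4. -/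

open Matrix
open scoped Matrix BigOperators ComplexOrder

noncomputable section

/-- |ψ⟩ = (1/2) Σ_{x₀,x₁} |x₀x₁⟩ ∈ X₀ ⊗ X₁. -/
def psiX : Fin 2 × Fin 2 → ℂ := fun _ => 1/2

/-- U_{x₀x₁} = diag((−1)^{x₀}, (−1)^{x₁}, 1) as a diagonal entry function. -/
def Udiag (x0 x1 : Fin 2) (b : Fin 3) : ℂ :=
  if b = 0 then (-1) ^ (x0 : ℕ) else if b = 1 then (-1) ^ (x1 : ℕ) else 1

/-- U₂ = Σ_{x₀,x₁} |x₀x₁⟩⟨x₀x₁| ⊗ U_{x₀x₁}, acting on X₀ ⊗ X₁ ⊗ B. -/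
def U2 : Mat (Fin 2 × Fin 2 × Fin 3) :=
  Matrix.diagonal fun p => Udiag p.1 p.2.1 p.2.2

/-- The state |ψ⟩⟨ψ| ⊗ σ_B on X₀ ⊗ X₁ ⊗ B. -/
def inState (σB : Mat (Fin 3)) : Mat (Fin 2 × Fin 2 × Fin 3) :=
  fun p q => outer psiX (p.1, p.2.1) (q.1, q.2.1) * σB p.2.2 q.2.2

/-- Partial trace over B, the last factor of X₀ ⊗ X₁ ⊗ B. -/
def trB (ρ : Mat (Fin 2 × Fin 2 × Fin 3)) : Mat (Fin 2 × Fin 2) :=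
  fun p q => ∑ b, ρ (p.1, p.2, b) (q.1, q.2, b)

/-- Partial trace over G₀ and G₁, the last two factors of X₀ ⊗ X₁ ⊗ G₀ ⊗ G₁. -/
def trG01 (σ : Mat (Fin 2 × Fin 2 × Fin 2 × Fin 2)) : Mat (Fin 2 × Fin 2) :=
  fun p q => ∑ g0, ∑ g1, σ (p.1, p.2, g0, g1) (q.1, q.2, g0, g1)

/-- P_accept = Σ_{x₀,x₁} |x₀x₁⟩⟨x₀x₁|_{X₀⊗X₁} ⊗ |x₀x₁⟩⟨x₀x₁|_{G₀⊗G₁}. -/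
def Pacc : Mat (Fin 2 × Fin 2 × Fin 2 × Fin 2) := fun p q =>
  match p, q with
  | (x0, x1, g0, g1), (x0', x1', g0', g1') =>
    ∑ u0 : Fin 2, ∑ u1 : Fin 2,
      ket (u0, u1) (x0, x1) * star (ket (u0, u1) (x0', x1')) *
      (ket (u0, u1) (g0, g1) * star (ket (u0, u1) (g0', g1')))

/-- The constraint Tr_{G₀,G₁}(σ) = Tr_B(U₂(|ψ⟩⟨ψ| ⊗ σ_B)U₂†). -/
def OTconstraint (σ : Mat (Fin 2 × Fin 2 × Fin 2 × Fin 2)) (σB : Mat (Fin 3)) : Prop :=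
  trG01 σ = trB (U2 * inState σB * U2ᴴ)

/-- Index for Y ⊗ A₀ ⊗ B₀ ⊗ A₁ ⊗ B₁. -/
abbrev I5 : Type := Fin 2 × Fin 3 × Fin 3 × Fin 3 × Fin 3

/-- P₀ = Σ_y |y⟩⟨y|_Y ⊗ |φ_y⟩⟨φ_y|_{A₀⊗B₀} ⊗ 1_{A₁} ⊗ |2⟩⟨2|_{B₁}. -/
def P0w : Mat I5 := fun p q =>
  match p, q with
  | (y, a0, b0, a1, b1), (y', a0', b0', a1', b1') =>
    ∑ u : Fin 2, ket u y * star (ket u y') *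
      (phi u (a0, b0) * star (phi u (a0', b0'))) *
      (if a1 = a1' then 1 else 0) *
      (ket (2 : Fin 3) b1 * star (ket (2 : Fin 3) b1'))

/-- P₁ = Σ_y |y⟩⟨y|_Y ⊗ 1_{A₀} ⊗ |2⟩⟨2|_{B₀} ⊗ |φ_y⟩⟨φ_y|_{A₁⊗B₁}. -/
def P1w : Mat I5 := fun p q =>
  match p, q with
  | (y, a0, b0, a1, b1), (y', a0', b0', a1', b1') =>
    ∑ u : Fin 2, ket u y * star (ket u y') *
      (if a0 = a0' then 1 else 0) *
      (ket (2 : Fin 3) b0 * star (ket (2 : Fin 3) b0')) *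
      (phi u (a1, b1) * star (phi u (a1', b1')))

/-- Partial trace over Y, A₀ and A₁, onto B₀ ⊗ B₁. -/
def trYA (ρ : Mat I5) : Mat (Fin 3 × Fin 3) :=
  fun p q => ∑ y, ∑ a0, ∑ a1,
    ρ (y, a0, p.1, a1, p.2) (y, a0, q.1, a1, q.2)

/-- Partial trace over B₁, the second factor of B₀ ⊗ B₁. -/
def trB1 (ρ : Mat (Fin 3 × Fin 3)) : Mat (Fin 3) :=
  fun b b' => ∑ b1, ρ (b, b1) (b', b1)

set_option linter.unusedSectionVars false
set_option maxHeartbeats 1000000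

section Machinery
variable {α : Type} [Fintype α] [DecidableEq α]

def B2 (σ : Mat α) (v w : α → ℂ) : ℂ := ∑ j, ∑ i, star (v j) * σ j i * w i

lemma B2_eq_dot (σ : Mat α) (v w : α → ℂ) :
    B2 σ v w = star v ⬝ᵥ σ *ᵥ w := by
  simp [B2, dotProduct, mulVec, Finset.mul_sum, mul_assoc]

lemma b2_self_nonneg {σ : Mat α} (h : σ.PosSemidef) (v : α → ℂ) : 0 ≤ B2 σ v v := by
  rw [B2_eq_dot]; exact h.dotProduct_mulVec_nonneg v

lemma b2_self_re_nonneg {σ : Mat α} (h : σ.PosSemidef) (v : α → ℂ) : 0 ≤ (B2 σ v v).re := by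
  have := b2_self_nonneg h v
  rw [Complex.le_def] at this; simpa using this.1

lemma B2_ket_ket (σ : Mat α) (p q : α) : B2 σ (ket p) (ket q) = σ p q := by
  simp [B2, ket]

lemma B2_comb (σ : Mat α) (v w : α → ℂ) (r s : ℝ) :
    B2 σ (fun i => (r:ℂ) * v i + (s:ℂ) * w i) (fun i => (r:ℂ) * v i + (s:ℂ) * w i)
      = (r:ℂ)^2 * B2 σ v v + (r*s:ℂ) * (B2 σ v w + B2 σ w v) + (s:ℂ)^2 * B2 σ w w := by
  have hR : (r:ℂ)^2 * B2 σ v v + (r*s:ℂ) * (B2 σ v w + B2 σ w v) + (s:ℂ)^2 * B2 σ w w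
      = ∑ j, ∑ i, ((r:ℂ)^2 * (star (v j) * σ j i * v i)
        + (r*s:ℂ) * (star (v j) * σ j i * w i + star (w j) * σ j i * v i)
        + (s:ℂ)^2 * (star (w j) * σ j i * w i)) := by
    simp only [B2, Finset.mul_sum, ← Finset.sum_add_distrib]
  rw [hR, B2]
  refine Finset.sum_congr rfl fun j _ => Finset.sum_congr rfl fun i _ => ?_
  simp only [star_add, star_mul', Complex.star_def, Complex.conj_ofReal]
  ring

/-- AM-GM style bound on the cross terms of a PSD form. -/
lemma cross_bound {σ : Mat α} (h : σ.PosSemidef) (v w : α → ℂ) {lam : ℝ} (hl : 0 < lam) :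
    (B2 σ v w + B2 σ w v).re ≤ lam * (B2 σ v v).re + (1/lam) * (B2 σ w w).re := by
  set r := Real.sqrt lam with hr
  have hr0 : 0 < r := Real.sqrt_pos.mpr hl
  have hr2 : r^2 = lam := Real.sq_sqrt hl.le
  have h0 := b2_self_nonneg h (fun i => (r:ℂ) * v i + ((-(1/r):ℝ):ℂ) * w i)
  rw [B2_comb] at h0
  rw [Complex.le_def] at h0
  have h1 := h0.1
  simp only [← Complex.ofReal_pow, ← Complex.ofReal_neg, ← Complex.ofReal_one,
    ← Complex.ofReal_div, ← Complex.ofReal_mul, Complex.add_re, Complex.mul_re,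
    Complex.ofReal_re, Complex.ofReal_im, Complex.zero_re, zero_mul, sub_zero] at h1
  have e2 : (r * -(1 / r) : ℝ) = -1 := by field_simp
  have e3 : ((-(1/r):ℝ))^2 = 1/lam := by
    rw [neg_pow, div_pow, one_pow, hr2]; ring
  rw [e2, e3, hr2] at h1
  rw [Complex.add_re]
  linarith [h1]

lemma ket_star (i j : α) : star (ket i j) = ket i j := by
  simp [ket, apply_ite star]

lemma ket_pair {β : Type} [DecidableEq β] (a : α) (b : β) (x : α) (y : β) :
    ket a x * ket b y = ket (a,b) (x,y) := by
  simp only [ket, Prod.mk.injEq, ite_and]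
  split_ifs with h1 h2 h2 <;> simp_all

lemma dot_ket (f : α → ℂ) (I : α) : (∑ j, f j * ket I j) = f I := by
  simp [ket]

lemma outer_posSemidef (v : α → ℂ) : (outer v).PosSemidef := by
  apply Matrix.PosSemidef.of_dotProduct_mulVec_nonneg
  · ext i j; simp [outer, conjTranspose, mul_comm]
  · intro x
    have : star x ⬝ᵥ (outer v) *ᵥ x
        = star (∑ i, star (v i) * x i) * (∑ i, star (v i) * x i) := by
      simp only [dotProduct, mulVec, outer, star_sum, star_mul', star_star, Pi.star_apply]
      rw [Finset.sum_mul]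
      refine Finset.sum_congr rfl fun i _ => ?_
      rw [Finset.mul_sum, Finset.mul_sum]
      refine Finset.sum_congr rfl fun j _ => ?_
      ring
    rw [this]
    exact star_mul_self_nonneg _

lemma trace_outer (v : α → ℂ) : (outer v).trace = ∑ i, v i * star (v i) := by
  simp [Matrix.trace, Matrix.diag, outer]

lemma hs_outer_left (v : α → ℂ) (Q : Mat α) : hs (outer v) Q = B2 Q v v := by
  simp only [hs, Matrix.trace, Matrix.diag, Matrix.mul_apply, conjTranspose_apply, outer, B2,
    star_mul', star_star]
  rw [Finset.sum_comm]
  refine Finset.sum_congr rfl fun j _ => Finset.sum_congr rfl fun i _ => by ring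

lemma hs_herm_outer {σ : Mat α} (h : σ.IsHermitian) (v : α → ℂ) :
    hs σ (outer v) = B2 σ v v := by
  simp only [hs, Matrix.trace, Matrix.diag, Matrix.mul_apply, conjTranspose_apply, outer, B2]
  refine Finset.sum_congr rfl fun j _ => Finset.sum_congr rfl fun i _ => ?_
  rw [← h.apply i j]
  simp only [star_star]
  ring

lemma hs_sum {κ : Type*} (s : Finset κ) (σ : Mat α) (f : κ → Mat α) :
    hs σ (∑ k ∈ s, f k) = ∑ k ∈ s, hs σ (f k) := by
  simp [hs, Matrix.mul_sum]

lemma B2_matsum {κ : Type*} (s : Finset κ) (M : κ → Mat α) (v w : α → ℂ) :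
    B2 (∑ k ∈ s, M k) v w = ∑ k ∈ s, B2 (M k) v w := by
  simp only [B2, Matrix.sum_apply, Finset.mul_sum, Finset.sum_mul]
  calc (∑ j, ∑ i, ∑ k ∈ s, star (v j) * M k j i * w i)
      = ∑ j, ∑ k ∈ s, ∑ i, star (v j) * M k j i * w i :=
        Finset.sum_congr rfl fun j _ => Finset.sum_comm
    _ = ∑ k ∈ s, ∑ j, ∑ i, star (v j) * M k j i * w i := Finset.sum_comm

lemma B2_outer (u v : α → ℂ) :
    B2 (outer u) v v = (∑ j, star (v j) * u j) * star (∑ j, star (v j) * u j) := by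
  simp only [B2, outer, star_sum, star_mul', star_star]
  rw [Finset.sum_mul]
  refine Finset.sum_congr rfl fun j _ => ?_
  rw [Finset.mul_sum]
  refine Finset.sum_congr rfl fun i _ => by ring

lemma B2_sum_left {κ : Type*} [Fintype κ] (σ : Mat α) (f : κ → α → ℂ) (w : α → ℂ) :
    B2 σ (fun i => ∑ k, f k i) w = ∑ k, B2 σ (f k) w := by
  simp only [B2, star_sum, Finset.sum_mul]
  calc (∑ j, ∑ i, ∑ k, star (f k j) * σ j i * w i)
      = ∑ j, ∑ k, ∑ i, star (f k j) * σ j i * w i :=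
        Finset.sum_congr rfl fun j _ => Finset.sum_comm
    _ = ∑ k, ∑ j, ∑ i, star (f k j) * σ j i * w i := Finset.sum_comm

lemma B2_sum_right {κ : Type*} [Fintype κ] (σ : Mat α) (v : α → ℂ) (g : κ → α → ℂ) :
    B2 σ v (fun i => ∑ k, g k i) = ∑ k, B2 σ v (g k) := by
  simp only [B2, Finset.mul_sum]
  calc (∑ j, ∑ i, ∑ k, star (v j) * σ j i * g k i)
      = ∑ j, ∑ k, ∑ i, star (v j) * σ j i * g k i :=
        Finset.sum_congr rfl fun j _ => Finset.sum_comm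
    _ = ∑ k, ∑ j, ∑ i, star (v j) * σ j i * g k i := Finset.sum_comm

lemma B2_sum_sum {κ : Type*} [Fintype κ] (σ : Mat α) (f g : κ → α → ℂ) :
    B2 σ (fun i => ∑ k, f k i) (fun i => ∑ k, g k i)
      = ∑ k, ∑ l, B2 σ (f k) (g l) := by
  rw [B2_sum_left]
  exact Finset.sum_congr rfl fun k _ => B2_sum_right σ (f k) g

end Machinery
section Decomp

lemma sum_ket_ket {α : Type} [Fintype α] [DecidableEq α] (x y : α) :
    (∑ c : α, ket c x * ket c y) = if x = y then (1:ℂ) else 0 := by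
  simp only [ket, ite_mul, one_mul, zero_mul, mul_ite, mul_one, mul_zero]
  rw [Finset.sum_ite_eq Finset.univ y (fun c => if x = c then (1:ℂ) else 0)]
  simp

lemma phi_star (y : Fin 2) (p : Fin 3 × Fin 3) : star (phi y p) = phi y p := by
  simp [phi, ket_star, star_div₀, Complex.star_def, Complex.conj_ofReal, apply_ite]

/-- phi as an explicit combination of kets -/
lemma phi_eq (y : Fin 2) : phi y = fun i =>
    (((Real.sqrt 2)⁻¹:ℝ):ℂ) * ket (f23 y, f23 y) i + (((Real.sqrt 2)⁻¹:ℝ):ℂ) * ket ((2:Fin 3),(2:Fin 3)) i := by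
  funext i
  simp only [phi, div_eq_mul_inv, Complex.ofReal_inv]
  ring

/-- Vectors for the P0w decomposition -/
def v0 (u : Fin 2) (c : Fin 3) : I5 → ℂ := fun i =>
  ket u i.1 * phi u (i.2.1, i.2.2.1) * ket c i.2.2.2.1 * ket 2 i.2.2.2.2

def v1 (u : Fin 2) (c : Fin 3) : I5 → ℂ := fun i =>
  ket u i.1 * ket c i.2.1 * ket 2 i.2.2.1 * phi u (i.2.2.2.1, i.2.2.2.2)

lemma P0w_eq : P0w = ∑ u : Fin 2, ∑ c : Fin 3, outer (v0 u c) := by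
  ext ⟨y,a0,b0,a1,b1⟩ ⟨y',a0',b0',a1',b1'⟩
  simp only [P0w, Matrix.sum_apply, outer, v0]
  refine Finset.sum_congr rfl fun u _ => ?_
  have : ∀ c : Fin 3,
      (ket u y * phi u (a0, b0) * ket c a1 * ket 2 b1) *
        star (ket u y' * phi u (a0', b0') * ket c a1' * ket 2 b1')
      = (ket u y * star (ket u y') * (phi u (a0, b0) * star (phi u (a0', b0'))) *
          (ket 2 b1 * star (ket 2 b1'))) * (ket c a1 * ket c a1') := by
    intro c
    simp only [star_mul', ket_star]
    ring
  rw [Finset.sum_congr rfl (fun c _ => this c), ← Finset.mul_sum, sum_ket_ket]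
  ring

lemma P1w_eq : P1w = ∑ u : Fin 2, ∑ c : Fin 3, outer (v1 u c) := by
  ext ⟨y,a0,b0,a1,b1⟩ ⟨y',a0',b0',a1',b1'⟩
  simp only [P1w, Matrix.sum_apply, outer, v1]
  refine Finset.sum_congr rfl fun u _ => ?_
  have : ∀ c : Fin 3,
      (ket u y * ket c a0 * ket 2 b0 * phi u (a1, b1)) *
        star (ket u y' * ket c a0' * ket 2 b0' * phi u (a1', b1'))
      = (ket u y * star (ket u y') * (ket 2 b0 * star (ket 2 b0')) *
          (phi u (a1, b1) * star (phi u (a1', b1')))) * (ket c a0 * ket c a0') := by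
    intro c
    simp only [star_mul', ket_star]
    ring
  rw [Finset.sum_congr rfl (fun c _ => this c), ← Finset.mul_sum, sum_ket_ket]
  ring

def wOT (u : Fin 2 × Fin 2) : (Fin 2 × Fin 2 × Fin 2 × Fin 2) → ℂ := fun i =>
  ket u (i.1, i.2.1) * ket u i.2.2

lemma Pacc_eq : Pacc = ∑ u0 : Fin 2, ∑ u1 : Fin 2, outer (wOT (u0,u1)) := by
  ext ⟨x0,x1,g0,g1⟩ ⟨x0',x1',g0',g1'⟩
  simp only [Pacc, Matrix.sum_apply, outer, wOT]
  refine Finset.sum_congr rfl fun u0 _ => Finset.sum_congr rfl fun u1 _ => ?_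
  simp only [star_mul', ket_star]
  ring

/-- v0 as explicit ket combination -/
lemma v0_eq (u : Fin 2) (c : Fin 3) : v0 u c = fun i =>
    (((Real.sqrt 2)⁻¹:ℝ):ℂ) * ket (u, f23 u, f23 u, c, (2:Fin 3)) i
      + (((Real.sqrt 2)⁻¹:ℝ):ℂ) * ket (u, (2:Fin 3), (2:Fin 3), c, (2:Fin 3)) i := by
  funext ⟨y,a0,b0,a1,b1⟩
  simp only [v0, phi_eq]
  rw [show ket (f23 u, f23 u) (a0,b0) = ket (f23 u) a0 * ket (f23 u) b0 by rw [ket_pair],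
      show ket ((2:Fin 3),(2:Fin 3)) (a0,b0) = ket (2:Fin 3) a0 * ket (2:Fin 3) b0 by rw [ket_pair]]
  have e1 : ket (u, f23 u, f23 u, c, (2:Fin 3)) (y,a0,b0,a1,b1)
      = ket u y * (ket (f23 u) a0 * (ket (f23 u) b0 * (ket c a1 * ket (2:Fin 3) b1))) := by
    rw [ket_pair, ket_pair, ket_pair, ket_pair]
  have e2 : ket (u, (2:Fin 3), (2:Fin 3), c, (2:Fin 3)) (y,a0,b0,a1,b1)
      = ket u y * (ket (2:Fin 3) a0 * (ket (2:Fin 3) b0 * (ket c a1 * ket (2:Fin 3) b1))) := by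
    rw [ket_pair, ket_pair, ket_pair, ket_pair]
  rw [e1, e2]
  ring

lemma v1_eq (u : Fin 2) (c : Fin 3) : v1 u c = fun i =>
    (((Real.sqrt 2)⁻¹:ℝ):ℂ) * ket (u, c, (2:Fin 3), f23 u, f23 u) i
      + (((Real.sqrt 2)⁻¹:ℝ):ℂ) * ket (u, c, (2:Fin 3), (2:Fin 3), (2:Fin 3)) i := by
  funext ⟨y,a0,b0,a1,b1⟩
  simp only [v1, phi_eq]
  rw [show ket (f23 u, f23 u) (a1,b1) = ket (f23 u) a1 * ket (f23 u) b1 by rw [ket_pair],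
      show ket ((2:Fin 3),(2:Fin 3)) (a1,b1) = ket (2:Fin 3) a1 * ket (2:Fin 3) b1 by rw [ket_pair]]
  have e1 : ket (u, c, (2:Fin 3), f23 u, f23 u) (y,a0,b0,a1,b1)
      = ket u y * (ket c a0 * (ket (2:Fin 3) b0 * (ket (f23 u) a1 * ket (f23 u) b1))) := by
    rw [ket_pair, ket_pair, ket_pair, ket_pair]
  have e2 : ket (u, c, (2:Fin 3), (2:Fin 3), (2:Fin 3)) (y,a0,b0,a1,b1)
      = ket u y * (ket c a0 * (ket (2:Fin 3) b0 * (ket (2:Fin 3) a1 * ket (2:Fin 3) b1))) := by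
    rw [ket_pair, ket_pair, ket_pair, ket_pair]
  rw [e1, e2]
  ring

end Decomp
section OTsec

def Ef : Fin 4 → Fin 2 × Fin 2 → ℝ := fun k x =>
  match k with
  | 0 => if x.1 = 0 then 1 else -1
  | 1 => if x.2 = 0 then 1 else -1
  | 2 => 1
  | 3 => (if x.1 = 0 then 1 else -1) * (if x.2 = 0 then 1 else -1)

def gv (k : Fin 4) (u : Fin 2 × Fin 2) : (Fin 2 × Fin 2 × Fin 2 × Fin 2) → ℂ := fun i =>
  ((Ef k (i.1, i.2.1) * Ef k u / 4 : ℝ) : ℂ) * ket u i.2.2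

lemma Efsum : ∀ x u : Fin 2 × Fin 2, (∑ k : Fin 4, Ef k x * Ef k u) = if x = u then 4 else 0 := by
  intro x u
  fin_cases x <;> fin_cases u <;> norm_num [Ef, Fin.sum_univ_four, Prod.ext_iff]

lemma wOT_eq_sum (u : Fin 2 × Fin 2) : wOT u = fun i => ∑ k : Fin 4, gv k u i := by
  funext ⟨x0,x1,g0,g1⟩
  simp only [wOT, gv]
  rw [← Finset.sum_mul]
  have e1 : (∑ k : Fin 4, ((Ef k (x0,x1) * Ef k u / 4 : ℝ) : ℂ))
      = (((∑ k : Fin 4, Ef k (x0,x1) * Ef k u) / 4 : ℝ) : ℂ) := by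
    push_cast [Finset.sum_div]
    rfl
  rw [e1, Efsum]
  by_cases hxu : (x0,x1) = u
  · simp [hxu, ket]
  · have : ket u (x0,x1) = 0 := by simp [ket, hxu]
    simp [hxu, this]

/-- entrywise form of the OT constraint -/
lemma OTentry {σ : Mat (Fin 2 × Fin 2 × Fin 2 × Fin 2)} {σB : Mat (Fin 3)}
    (h : OTconstraint σ σB) (x0 x1 x0' x1' : Fin 2) :
    (∑ g0 : Fin 2, ∑ g1 : Fin 2, σ (x0,x1,g0,g1) (x0',x1',g0,g1))
      = ∑ b : Fin 3, Udiag x0 x1 b * ((1/4:ℂ) * σB b b) * star (Udiag x0' x1' b) := by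
  have := congrFun (congrFun h (x0,x1)) (x0',x1')
  simp only [trG01, trB] at this ⊢
  rw [this]
  refine Finset.sum_congr rfl fun b _ => ?_
  rw [show U2 * inState σB * U2ᴴ = Matrix.diagonal (fun p => Udiag p.1 p.2.1 p.2.2) *
        (inState σB * (Matrix.diagonal (fun p => Udiag p.1 p.2.1 p.2.2))ᴴ) by
      rw [U2, Matrix.mul_assoc]]
  rw [Matrix.diagonal_conjTranspose]
  simp only [Matrix.diagonal_mul, Matrix.mul_diagonal, Pi.star_apply]
  simp only [inState, outer, psiX]
  norm_num
  ring

lemma OTentry' {σ : Mat (Fin 2 × Fin 2 × Fin 2 × Fin 2)} {σB : Mat (Fin 3)}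
    (h : OTconstraint σ σB) (x0 x1 x0' x1' : Fin 2) :
    (∑ g0 : Fin 2, ∑ g1 : Fin 2, σ (x0,x1,g0,g1) (x0',x1',g0,g1))
      = ((if x0 = x0' then (1:ℂ) else -1) * σB 0 0
        + (if x1 = x1' then (1:ℂ) else -1) * σB 1 1 + σB 2 2) / 4 := by
  rw [OTentry h]
  fin_cases x0 <;> fin_cases x0' <;> fin_cases x1 <;> fin_cases x1' <;>
    · simp [Udiag, Fin.sum_univ_three]
      ring

lemma sumF0 (σ : Mat (Fin 2 × Fin 2 × Fin 2 × Fin 2)) (σB : Mat (Fin 3))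
    (h : OTconstraint σ σB) :
    ∑ u : Fin 2 × Fin 2, B2 σ (gv 0 u) (gv 0 u) = (1/4:ℂ) * σB 0 0 := by
  have hc0000 := OTentry' h 0 0 0 0
  norm_num at hc0000
  have hc0001 := OTentry' h 0 0 0 1
  norm_num at hc0001
  have hc0010 := OTentry' h 0 0 1 0
  norm_num at hc0010
  have hc0011 := OTentry' h 0 0 1 1
  norm_num at hc0011
  have hc0100 := OTentry' h 0 1 0 0
  norm_num at hc0100
  have hc0101 := OTentry' h 0 1 0 1
  norm_num at hc0101
  have hc0110 := OTentry' h 0 1 1 0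
  norm_num at hc0110
  have hc0111 := OTentry' h 0 1 1 1
  norm_num at hc0111
  have hc1000 := OTentry' h 1 0 0 0
  norm_num at hc1000
  have hc1001 := OTentry' h 1 0 0 1
  norm_num at hc1001
  have hc1010 := OTentry' h 1 0 1 0
  norm_num at hc1010
  have hc1011 := OTentry' h 1 0 1 1
  norm_num at hc1011
  have hc1100 := OTentry' h 1 1 0 0
  norm_num at hc1100
  have hc1101 := OTentry' h 1 1 0 1
  norm_num at hc1101
  have hc1110 := OTentry' h 1 1 1 0
  norm_num at hc1110
  have hc1111 := OTentry' h 1 1 1 1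
  norm_num at hc1111
  simp only [B2, gv, Ef, Fintype.sum_prod_type, Fin.sum_univ_two, ket, Prod.mk.injEq]
  norm_num
  linear_combination (1/16 : ℂ) * hc0000 + (1/16 : ℂ) * hc0001 + (-1/16 : ℂ) * hc0010 + (-1/16 : ℂ) * hc0011 + (1/16 : ℂ) * hc0100 + (1/16 : ℂ) * hc0101 + (-1/16 : ℂ) * hc0110 + (-1/16 : ℂ) * hc0111 + (-1/16 : ℂ) * hc1000 + (-1/16 : ℂ) * hc1001 + (1/16 : ℂ) * hc1010 + (1/16 : ℂ) * hc1011 + (-1/16 : ℂ) * hc1100 + (-1/16 : ℂ) * hc1101 + (1/16 : ℂ) * hc1110 + (1/16 : ℂ) * hc1111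

lemma sumF1 (σ : Mat (Fin 2 × Fin 2 × Fin 2 × Fin 2)) (σB : Mat (Fin 3))
    (h : OTconstraint σ σB) :
    ∑ u : Fin 2 × Fin 2, B2 σ (gv 1 u) (gv 1 u) = (1/4:ℂ) * σB 1 1 := by
  have hc0000 := OTentry' h 0 0 0 0
  norm_num at hc0000
  have hc0001 := OTentry' h 0 0 0 1
  norm_num at hc0001
  have hc0010 := OTentry' h 0 0 1 0
  norm_num at hc0010
  have hc0011 := OTentry' h 0 0 1 1
  norm_num at hc0011
  have hc0100 := OTentry' h 0 1 0 0
  norm_num at hc0100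
  have hc0101 := OTentry' h 0 1 0 1
  norm_num at hc0101
  have hc0110 := OTentry' h 0 1 1 0
  norm_num at hc0110
  have hc0111 := OTentry' h 0 1 1 1
  norm_num at hc0111
  have hc1000 := OTentry' h 1 0 0 0
  norm_num at hc1000
  have hc1001 := OTentry' h 1 0 0 1
  norm_num at hc1001
  have hc1010 := OTentry' h 1 0 1 0
  norm_num at hc1010
  have hc1011 := OTentry' h 1 0 1 1
  norm_num at hc1011
  have hc1100 := OTentry' h 1 1 0 0
  norm_num at hc1100
  have hc1101 := OTentry' h 1 1 0 1
  norm_num at hc1101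
  have hc1110 := OTentry' h 1 1 1 0
  norm_num at hc1110
  have hc1111 := OTentry' h 1 1 1 1
  norm_num at hc1111
  simp only [B2, gv, Ef, Fintype.sum_prod_type, Fin.sum_univ_two, ket, Prod.mk.injEq]
  norm_num
  linear_combination (1/16 : ℂ) * hc0000 + (-1/16 : ℂ) * hc0001 + (1/16 : ℂ) * hc0010 + (-1/16 : ℂ) * hc0011 + (-1/16 : ℂ) * hc0100 + (1/16 : ℂ) * hc0101 + (-1/16 : ℂ) * hc0110 + (1/16 : ℂ) * hc0111 + (1/16 : ℂ) * hc1000 + (-1/16 : ℂ) * hc1001 + (1/16 : ℂ) * hc1010 + (-1/16 : ℂ) * hc1011 + (-1/16 : ℂ) * hc1100 + (1/16 : ℂ) * hc1101 + (-1/16 : ℂ) * hc1110 + (1/16 : ℂ) * hc1111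

lemma sumF2 (σ : Mat (Fin 2 × Fin 2 × Fin 2 × Fin 2)) (σB : Mat (Fin 3))
    (h : OTconstraint σ σB) :
    ∑ u : Fin 2 × Fin 2, B2 σ (gv 2 u) (gv 2 u) = (1/4:ℂ) * σB 2 2 := by
  have hc0000 := OTentry' h 0 0 0 0
  norm_num at hc0000
  have hc0001 := OTentry' h 0 0 0 1
  norm_num at hc0001
  have hc0010 := OTentry' h 0 0 1 0
  norm_num at hc0010
  have hc0011 := OTentry' h 0 0 1 1
  norm_num at hc0011
  have hc0100 := OTentry' h 0 1 0 0
  norm_num at hc0100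
  have hc0101 := OTentry' h 0 1 0 1
  norm_num at hc0101
  have hc0110 := OTentry' h 0 1 1 0
  norm_num at hc0110
  have hc0111 := OTentry' h 0 1 1 1
  norm_num at hc0111
  have hc1000 := OTentry' h 1 0 0 0
  norm_num at hc1000
  have hc1001 := OTentry' h 1 0 0 1
  norm_num at hc1001
  have hc1010 := OTentry' h 1 0 1 0
  norm_num at hc1010
  have hc1011 := OTentry' h 1 0 1 1
  norm_num at hc1011
  have hc1100 := OTentry' h 1 1 0 0
  norm_num at hc1100
  have hc1101 := OTentry' h 1 1 0 1
  norm_num at hc1101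
  have hc1110 := OTentry' h 1 1 1 0
  norm_num at hc1110
  have hc1111 := OTentry' h 1 1 1 1
  norm_num at hc1111
  simp only [B2, gv, Ef, Fintype.sum_prod_type, Fin.sum_univ_two, ket, Prod.mk.injEq]
  norm_num
  linear_combination (1/16 : ℂ) * hc0000 + (1/16 : ℂ) * hc0001 + (1/16 : ℂ) * hc0010 + (1/16 : ℂ) * hc0011 + (1/16 : ℂ) * hc0100 + (1/16 : ℂ) * hc0101 + (1/16 : ℂ) * hc0110 + (1/16 : ℂ) * hc0111 + (1/16 : ℂ) * hc1000 + (1/16 : ℂ) * hc1001 + (1/16 : ℂ) * hc1010 + (1/16 : ℂ) * hc1011 + (1/16 : ℂ) * hc1100 + (1/16 : ℂ) * hc1101 + (1/16 : ℂ) * hc1110 + (1/16 : ℂ) * hc1111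

lemma sumF3 (σ : Mat (Fin 2 × Fin 2 × Fin 2 × Fin 2)) (σB : Mat (Fin 3))
    (h : OTconstraint σ σB) :
    ∑ u : Fin 2 × Fin 2, B2 σ (gv 3 u) (gv 3 u) = (0:ℂ) := by
  have hc0000 := OTentry' h 0 0 0 0
  norm_num at hc0000
  have hc0001 := OTentry' h 0 0 0 1
  norm_num at hc0001
  have hc0010 := OTentry' h 0 0 1 0
  norm_num at hc0010
  have hc0011 := OTentry' h 0 0 1 1
  norm_num at hc0011
  have hc0100 := OTentry' h 0 1 0 0
  norm_num at hc0100
  have hc0101 := OTentry' h 0 1 0 1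
  norm_num at hc0101
  have hc0110 := OTentry' h 0 1 1 0
  norm_num at hc0110
  have hc0111 := OTentry' h 0 1 1 1
  norm_num at hc0111
  have hc1000 := OTentry' h 1 0 0 0
  norm_num at hc1000
  have hc1001 := OTentry' h 1 0 0 1
  norm_num at hc1001
  have hc1010 := OTentry' h 1 0 1 0
  norm_num at hc1010
  have hc1011 := OTentry' h 1 0 1 1
  norm_num at hc1011
  have hc1100 := OTentry' h 1 1 0 0
  norm_num at hc1100
  have hc1101 := OTentry' h 1 1 0 1
  norm_num at hc1101
  have hc1110 := OTentry' h 1 1 1 0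
  norm_num at hc1110
  have hc1111 := OTentry' h 1 1 1 1
  norm_num at hc1111
  simp only [B2, gv, Ef, Fintype.sum_prod_type, Fin.sum_univ_two, ket, Prod.mk.injEq]
  norm_num
  linear_combination (1/16 : ℂ) * hc0000 + (-1/16 : ℂ) * hc0001 + (-1/16 : ℂ) * hc0010 + (1/16 : ℂ) * hc0011 + (-1/16 : ℂ) * hc0100 + (1/16 : ℂ) * hc0101 + (1/16 : ℂ) * hc0110 + (-1/16 : ℂ) * hc0111 + (-1/16 : ℂ) * hc1000 + (1/16 : ℂ) * hc1001 + (1/16 : ℂ) * hc1010 + (-1/16 : ℂ) * hc1011 + (1/16 : ℂ) * hc1100 + (-1/16 : ℂ) * hc1101 + (-1/16 : ℂ) * hc1110 + (1/16 : ℂ) * hc1111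

end OTsec

lemma OT_bound {σ : Mat (Fin 2 × Fin 2 × Fin 2 × Fin 2)} {σB : Mat (Fin 3)}
    (hσ : σ.PosSemidef) (h : OTconstraint σ σB) :
    (hs σ Pacc).re ≤ (1/4) * ((2 + 8707/5000 + 1/100000) * ((σB 0 0).re + (σB 1 1).re)
      + (1 + 10000/8707 + 1/100000) * (σB 2 2).re) := by
  have e1 : hs σ Pacc = ∑ u : Fin 2 × Fin 2, B2 σ (wOT u) (wOT u) := by
    rw [Pacc_eq, hs_sum, Fintype.sum_prod_type]
    refine Finset.sum_congr rfl fun u0 _ => ?_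
    rw [hs_sum]
    exact Finset.sum_congr rfl fun u1 _ => hs_herm_outer hσ.1 _
  have e2 : ∀ u, B2 σ (wOT u) (wOT u) = ∑ k : Fin 4, ∑ l : Fin 4, B2 σ (gv k u) (gv l u) := by
    intro u
    rw [wOT_eq_sum u]
    exact B2_sum_sum σ (fun k => gv k u) (fun l => gv l u)
  have e3 : (hs σ Pacc).re
      = ∑ u : Fin 2 × Fin 2, ∑ k : Fin 4, ∑ l : Fin 4, (B2 σ (gv k u) (gv l u)).re := by
    rw [e1, Finset.sum_congr rfl (fun u _ => e2 u)]
    simp [Complex.re_sum]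
  rw [e3]
  simp only [Fintype.sum_prod_type, Fin.sum_univ_two, Fin.sum_univ_four]
  have hx0100 := cross_bound hσ (gv 0 (0,0)) (gv 1 (0,0)) (show (0:ℝ) < (1:ℝ) by norm_num)
  rw [Complex.add_re] at hx0100
  have hx0101 := cross_bound hσ (gv 0 (0,1)) (gv 1 (0,1)) (show (0:ℝ) < (1:ℝ) by norm_num)
  rw [Complex.add_re] at hx0101
  have hx0110 := cross_bound hσ (gv 0 (1,0)) (gv 1 (1,0)) (show (0:ℝ) < (1:ℝ) by norm_num)
  rw [Complex.add_re] at hx0110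
  have hx0111 := cross_bound hσ (gv 0 (1,1)) (gv 1 (1,1)) (show (0:ℝ) < (1:ℝ) by norm_num)
  rw [Complex.add_re] at hx0111
  have hx0200 := cross_bound hσ (gv 0 (0,0)) (gv 2 (0,0)) (show (0:ℝ) < (8707/5000:ℝ) by norm_num)
  rw [Complex.add_re] at hx0200
  have hx0201 := cross_bound hσ (gv 0 (0,1)) (gv 2 (0,1)) (show (0:ℝ) < (8707/5000:ℝ) by norm_num)
  rw [Complex.add_re] at hx0201
  have hx0210 := cross_bound hσ (gv 0 (1,0)) (gv 2 (1,0)) (show (0:ℝ) < (8707/5000:ℝ) by norm_num)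
  rw [Complex.add_re] at hx0210
  have hx0211 := cross_bound hσ (gv 0 (1,1)) (gv 2 (1,1)) (show (0:ℝ) < (8707/5000:ℝ) by norm_num)
  rw [Complex.add_re] at hx0211
  have hx1200 := cross_bound hσ (gv 1 (0,0)) (gv 2 (0,0)) (show (0:ℝ) < (8707/5000:ℝ) by norm_num)
  rw [Complex.add_re] at hx1200
  have hx1201 := cross_bound hσ (gv 1 (0,1)) (gv 2 (0,1)) (show (0:ℝ) < (8707/5000:ℝ) by norm_num)
  rw [Complex.add_re] at hx1201
  have hx1210 := cross_bound hσ (gv 1 (1,0)) (gv 2 (1,0)) (show (0:ℝ) < (8707/5000:ℝ) by norm_num)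
  rw [Complex.add_re] at hx1210
  have hx1211 := cross_bound hσ (gv 1 (1,1)) (gv 2 (1,1)) (show (0:ℝ) < (8707/5000:ℝ) by norm_num)
  rw [Complex.add_re] at hx1211
  have hx0300 := cross_bound hσ (gv 0 (0,0)) (gv 3 (0,0)) (show (0:ℝ) < (1/100000:ℝ) by norm_num)
  rw [Complex.add_re] at hx0300
  have hx0301 := cross_bound hσ (gv 0 (0,1)) (gv 3 (0,1)) (show (0:ℝ) < (1/100000:ℝ) by norm_num)
  rw [Complex.add_re] at hx0301
  have hx0310 := cross_bound hσ (gv 0 (1,0)) (gv 3 (1,0)) (show (0:ℝ) < (1/100000:ℝ) by norm_num)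
  rw [Complex.add_re] at hx0310
  have hx0311 := cross_bound hσ (gv 0 (1,1)) (gv 3 (1,1)) (show (0:ℝ) < (1/100000:ℝ) by norm_num)
  rw [Complex.add_re] at hx0311
  have hx1300 := cross_bound hσ (gv 1 (0,0)) (gv 3 (0,0)) (show (0:ℝ) < (1/100000:ℝ) by norm_num)
  rw [Complex.add_re] at hx1300
  have hx1301 := cross_bound hσ (gv 1 (0,1)) (gv 3 (0,1)) (show (0:ℝ) < (1/100000:ℝ) by norm_num)
  rw [Complex.add_re] at hx1301
  have hx1310 := cross_bound hσ (gv 1 (1,0)) (gv 3 (1,0)) (show (0:ℝ) < (1/100000:ℝ) by norm_num)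
  rw [Complex.add_re] at hx1310
  have hx1311 := cross_bound hσ (gv 1 (1,1)) (gv 3 (1,1)) (show (0:ℝ) < (1/100000:ℝ) by norm_num)
  rw [Complex.add_re] at hx1311
  have hx2300 := cross_bound hσ (gv 2 (0,0)) (gv 3 (0,0)) (show (0:ℝ) < (1/100000:ℝ) by norm_num)
  rw [Complex.add_re] at hx2300
  have hx2301 := cross_bound hσ (gv 2 (0,1)) (gv 3 (0,1)) (show (0:ℝ) < (1/100000:ℝ) by norm_num)
  rw [Complex.add_re] at hx2301
  have hx2310 := cross_bound hσ (gv 2 (1,0)) (gv 3 (1,0)) (show (0:ℝ) < (1/100000:ℝ) by norm_num)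
  rw [Complex.add_re] at hx2310
  have hx2311 := cross_bound hσ (gv 2 (1,1)) (gv 3 (1,1)) (show (0:ℝ) < (1/100000:ℝ) by norm_num)
  rw [Complex.add_re] at hx2311
  have hs0 := congrArg Complex.re (sumF0 σ σB h)
  simp only [Complex.re_sum, Fintype.sum_prod_type, Fin.sum_univ_two, Complex.mul_re, Complex.ofReal_re] at hs0
  norm_num at hs0
  have hs1 := congrArg Complex.re (sumF1 σ σB h)
  simp only [Complex.re_sum, Fintype.sum_prod_type, Fin.sum_univ_two, Complex.mul_re, Complex.ofReal_re] at hs1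
  norm_num at hs1
  have hs2 := congrArg Complex.re (sumF2 σ σB h)
  simp only [Complex.re_sum, Fintype.sum_prod_type, Fin.sum_univ_two, Complex.mul_re, Complex.ofReal_re] at hs2
  norm_num at hs2
  have hs3 := congrArg Complex.re (sumF3 σ σB h)
  simp only [Complex.re_sum, Fintype.sum_prod_type, Fin.sum_univ_two, Complex.mul_re, Complex.ofReal_re] at hs3
  norm_num at hs3
  linarith
section BCWCF

lemma diag_re_nonneg {α : Type} [Fintype α] [DecidableEq α] {σ : Mat α}
    (hσ : σ.PosSemidef) (i : α) : 0 ≤ (σ i i).re := by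
  have := b2_self_re_nonneg hσ (ket i)
  rwa [B2_ket_ket] at this

lemma pair_form_bound {α : Type} [Fintype α] [DecidableEq α] {σ : Mat α}
    (hσ : σ.PosSemidef) (p q : α) {lam : ℝ} (hl : 0 < lam) :
    (B2 σ (fun i => (((Real.sqrt 2)⁻¹:ℝ):ℂ) * ket p i + (((Real.sqrt 2)⁻¹:ℝ):ℂ) * ket q i)
        (fun i => (((Real.sqrt 2)⁻¹:ℝ):ℂ) * ket p i + (((Real.sqrt 2)⁻¹:ℝ):ℂ) * ket q i)).re
      ≤ (1/2)*(1+lam)*(σ p p).re + (1/2)*(1+1/lam)*(σ q q).re := by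
  rw [B2_comb σ (ket p) (ket q) ((Real.sqrt 2)⁻¹) ((Real.sqrt 2)⁻¹)]
  have hss : Real.sqrt 2 * Real.sqrt 2 = 2 := Real.mul_self_sqrt (by norm_num)
  have h2 : ((Real.sqrt 2)⁻¹ * (Real.sqrt 2)⁻¹ : ℝ) = 1/2 := by
    rw [← mul_inv, hss]; norm_num
  have h2' : (((Real.sqrt 2)⁻¹:ℝ))^2 = 1/2 := by rw [sq]; exact h2
  have hc := cross_bound hσ (ket p) (ket q) hl
  simp only [B2_ket_ket, Complex.add_re] at hc
  simp only [← Complex.ofReal_pow, ← Complex.ofReal_mul, Complex.add_re, h2, h2',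
    Complex.mul_re, Complex.ofReal_re, Complex.ofReal_im, zero_mul, sub_zero,
    B2_ket_ket]
  linarith [hc]

lemma f23_zero : f23 0 = 0 := rfl
lemma f23_one : f23 1 = 1 := rfl

lemma BC_bound0 {σ : Mat (Fin 3 × Fin 3)} {σB : Mat (Fin 3)}
    (hσ : σ.PosSemidef) (hm : ptrA σ = σB) :
    (hs (outer (phi 0)) σ).re ≤ (1/2)*(1+8707/5000)*(σB 0 0).re
      + (1/2)*(1+5000/8707)*(σB 2 2).re := by
  rw [hs_outer_left, phi_eq 0, f23_zero]
  have hb := pair_form_bound hσ ((0:Fin 3),(0:Fin 3)) ((2:Fin 3),(2:Fin 3))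
    (show (0:ℝ) < 8707/5000 by norm_num)
  have hm0 := congrFun (congrFun hm 0) 0
  have hm2 := congrFun (congrFun hm 2) 2
  simp only [ptrA, Fin.sum_univ_three] at hm0 hm2
  have e0 : (σB 0 0).re = (σ (0,0) (0,0)).re + (σ (1,0) (1,0)).re + (σ (2,0) (2,0)).re := by
    rw [← hm0]; simp [Complex.add_re]
  have e2 : (σB 2 2).re = (σ (0,2) (0,2)).re + (σ (1,2) (1,2)).re + (σ (2,2) (2,2)).re := by
    rw [← hm2]; simp [Complex.add_re]
  have n1 := diag_re_nonneg hσ ((1:Fin 3),(0:Fin 3))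
  have n2 := diag_re_nonneg hσ ((2:Fin 3),(0:Fin 3))
  have n3 := diag_re_nonneg hσ ((0:Fin 3),(2:Fin 3))
  have n4 := diag_re_nonneg hσ ((1:Fin 3),(2:Fin 3))
  linarith [hb]

lemma BC_bound1 {σ : Mat (Fin 3 × Fin 3)} {σB : Mat (Fin 3)}
    (hσ : σ.PosSemidef) (hm : ptrA σ = σB) :
    (hs (outer (phi 1)) σ).re ≤ (1/2)*(1+8707/5000)*(σB 1 1).re
      + (1/2)*(1+5000/8707)*(σB 2 2).re := by
  rw [hs_outer_left, phi_eq 1, f23_one]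
  have hb := pair_form_bound hσ ((1:Fin 3),(1:Fin 3)) ((2:Fin 3),(2:Fin 3))
    (show (0:ℝ) < 8707/5000 by norm_num)
  have hm0 := congrFun (congrFun hm 1) 1
  have hm2 := congrFun (congrFun hm 2) 2
  simp only [ptrA, Fin.sum_univ_three] at hm0 hm2
  have e0 : (σB 1 1).re = (σ (0,1) (0,1)).re + (σ (1,1) (1,1)).re + (σ (2,1) (2,1)).re := by
    rw [← hm0]; simp [Complex.add_re]
  have e2 : (σB 2 2).re = (σ (0,2) (0,2)).re + (σ (1,2) (1,2)).re + (σ (2,2) (2,2)).re := by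
    rw [← hm2]; simp [Complex.add_re]
  have n1 := diag_re_nonneg hσ ((0:Fin 3),(1:Fin 3))
  have n2 := diag_re_nonneg hσ ((2:Fin 3),(1:Fin 3))
  have n3 := diag_re_nonneg hσ ((0:Fin 3),(2:Fin 3))
  have n4 := diag_re_nonneg hσ ((1:Fin 3),(2:Fin 3))
  linarith [hb]
lemma WCF_bound0 {σ : Mat I5} (hσ : σ.PosSemidef) :
    (hs σ P0w).re ≤ (1/2)*(1+2261/2000)*(((trYA σ) ((0:Fin 3),(2:Fin 3)) ((0:Fin 3),(2:Fin 3))).re + ((trYA σ) ((1:Fin 3),(2:Fin 3)) ((1:Fin 3),(2:Fin 3))).re) + (1/2)*(1+2000/2261)*((trYA σ) ((2:Fin 3),(2:Fin 3)) ((2:Fin 3),(2:Fin 3))).re := by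
  have e1 : hs σ P0w = ∑ u : Fin 2, ∑ c : Fin 3, B2 σ (v0 u c) (v0 u c) := by
    rw [P0w_eq, hs_sum]
    refine Finset.sum_congr rfl fun u _ => ?_
    rw [hs_sum]
    exact Finset.sum_congr rfl fun c _ => hs_herm_outer hσ.1 _
  have e2 : (hs σ P0w).re = ∑ u : Fin 2, ∑ c : Fin 3, (B2 σ (v0 u c) (v0 u c)).re := by
    rw [e1]; simp [Complex.re_sum]
  rw [e2]
  simp only [Fin.sum_univ_two, Fin.sum_univ_three]
  have hb00 : (B2 σ (v0 (0:Fin 2) (0:Fin 3)) (v0 (0:Fin 2) (0:Fin 3))).re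
      ≤ (1/2)*(1+2261/2000)*(σ ((0:Fin 2),(0:Fin 3),(0:Fin 3),(0:Fin 3),(2:Fin 3)) ((0:Fin 2),(0:Fin 3),(0:Fin 3),(0:Fin 3),(2:Fin 3))).re + (1/2)*(1+2000/2261)*(σ ((0:Fin 2),(2:Fin 3),(2:Fin 3),(0:Fin 3),(2:Fin 3)) ((0:Fin 2),(2:Fin 3),(2:Fin 3),(0:Fin 3),(2:Fin 3))).re := by
    rw [v0_eq]
    have := pair_form_bound hσ ((0:Fin 2),(0:Fin 3),(0:Fin 3),(0:Fin 3),(2:Fin 3)) ((0:Fin 2),(2:Fin 3),(2:Fin 3),(0:Fin 3),(2:Fin 3)) (show (0:ℝ) < 2261/2000 by norm_num)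
    simp only [f23_zero, f23_one] at *
    convert this using 3 <;> norm_num
  have hb01 : (B2 σ (v0 (0:Fin 2) (1:Fin 3)) (v0 (0:Fin 2) (1:Fin 3))).re
      ≤ (1/2)*(1+2261/2000)*(σ ((0:Fin 2),(0:Fin 3),(0:Fin 3),(1:Fin 3),(2:Fin 3)) ((0:Fin 2),(0:Fin 3),(0:Fin 3),(1:Fin 3),(2:Fin 3))).re + (1/2)*(1+2000/2261)*(σ ((0:Fin 2),(2:Fin 3),(2:Fin 3),(1:Fin 3),(2:Fin 3)) ((0:Fin 2),(2:Fin 3),(2:Fin 3),(1:Fin 3),(2:Fin 3))).re := by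
    rw [v0_eq]
    have := pair_form_bound hσ ((0:Fin 2),(0:Fin 3),(0:Fin 3),(1:Fin 3),(2:Fin 3)) ((0:Fin 2),(2:Fin 3),(2:Fin 3),(1:Fin 3),(2:Fin 3)) (show (0:ℝ) < 2261/2000 by norm_num)
    simp only [f23_zero, f23_one] at *
    convert this using 3 <;> norm_num
  have hb02 : (B2 σ (v0 (0:Fin 2) (2:Fin 3)) (v0 (0:Fin 2) (2:Fin 3))).re
      ≤ (1/2)*(1+2261/2000)*(σ ((0:Fin 2),(0:Fin 3),(0:Fin 3),(2:Fin 3),(2:Fin 3)) ((0:Fin 2),(0:Fin 3),(0:Fin 3),(2:Fin 3),(2:Fin 3))).re + (1/2)*(1+2000/2261)*(σ ((0:Fin 2),(2:Fin 3),(2:Fin 3),(2:Fin 3),(2:Fin 3)) ((0:Fin 2),(2:Fin 3),(2:Fin 3),(2:Fin 3),(2:Fin 3))).re := by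
    rw [v0_eq]
    have := pair_form_bound hσ ((0:Fin 2),(0:Fin 3),(0:Fin 3),(2:Fin 3),(2:Fin 3)) ((0:Fin 2),(2:Fin 3),(2:Fin 3),(2:Fin 3),(2:Fin 3)) (show (0:ℝ) < 2261/2000 by norm_num)
    simp only [f23_zero, f23_one] at *
    convert this using 3 <;> norm_num
  have hb10 : (B2 σ (v0 (1:Fin 2) (0:Fin 3)) (v0 (1:Fin 2) (0:Fin 3))).re
      ≤ (1/2)*(1+2261/2000)*(σ ((1:Fin 2),(1:Fin 3),(1:Fin 3),(0:Fin 3),(2:Fin 3)) ((1:Fin 2),(1:Fin 3),(1:Fin 3),(0:Fin 3),(2:Fin 3))).re + (1/2)*(1+2000/2261)*(σ ((1:Fin 2),(2:Fin 3),(2:Fin 3),(0:Fin 3),(2:Fin 3)) ((1:Fin 2),(2:Fin 3),(2:Fin 3),(0:Fin 3),(2:Fin 3))).re := by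
    rw [v0_eq]
    have := pair_form_bound hσ ((1:Fin 2),(1:Fin 3),(1:Fin 3),(0:Fin 3),(2:Fin 3)) ((1:Fin 2),(2:Fin 3),(2:Fin 3),(0:Fin 3),(2:Fin 3)) (show (0:ℝ) < 2261/2000 by norm_num)
    simp only [f23_zero, f23_one] at *
    convert this using 3 <;> norm_num
  have hb11 : (B2 σ (v0 (1:Fin 2) (1:Fin 3)) (v0 (1:Fin 2) (1:Fin 3))).re
      ≤ (1/2)*(1+2261/2000)*(σ ((1:Fin 2),(1:Fin 3),(1:Fin 3),(1:Fin 3),(2:Fin 3)) ((1:Fin 2),(1:Fin 3),(1:Fin 3),(1:Fin 3),(2:Fin 3))).re + (1/2)*(1+2000/2261)*(σ ((1:Fin 2),(2:Fin 3),(2:Fin 3),(1:Fin 3),(2:Fin 3)) ((1:Fin 2),(2:Fin 3),(2:Fin 3),(1:Fin 3),(2:Fin 3))).re := by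
    rw [v0_eq]
    have := pair_form_bound hσ ((1:Fin 2),(1:Fin 3),(1:Fin 3),(1:Fin 3),(2:Fin 3)) ((1:Fin 2),(2:Fin 3),(2:Fin 3),(1:Fin 3),(2:Fin 3)) (show (0:ℝ) < 2261/2000 by norm_num)
    simp only [f23_zero, f23_one] at *
    convert this using 3 <;> norm_num
  have hb12 : (B2 σ (v0 (1:Fin 2) (2:Fin 3)) (v0 (1:Fin 2) (2:Fin 3))).re
      ≤ (1/2)*(1+2261/2000)*(σ ((1:Fin 2),(1:Fin 3),(1:Fin 3),(2:Fin 3),(2:Fin 3)) ((1:Fin 2),(1:Fin 3),(1:Fin 3),(2:Fin 3),(2:Fin 3))).re + (1/2)*(1+2000/2261)*(σ ((1:Fin 2),(2:Fin 3),(2:Fin 3),(2:Fin 3),(2:Fin 3)) ((1:Fin 2),(2:Fin 3),(2:Fin 3),(2:Fin 3),(2:Fin 3))).re := by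
    rw [v0_eq]
    have := pair_form_bound hσ ((1:Fin 2),(1:Fin 3),(1:Fin 3),(2:Fin 3),(2:Fin 3)) ((1:Fin 2),(2:Fin 3),(2:Fin 3),(2:Fin 3),(2:Fin 3)) (show (0:ℝ) < 2261/2000 by norm_num)
    simp only [f23_zero, f23_one] at *
    convert this using 3 <;> norm_num
  have m0 : ((trYA σ) ((0:Fin 3),(2:Fin 3)) ((0:Fin 3),(2:Fin 3))).re
      = ∑ y : Fin 2, ∑ a0 : Fin 3, ∑ a1 : Fin 3, (σ (y,a0,(0:Fin 3),a1,(2:Fin 3)) (y,a0,(0:Fin 3),a1,(2:Fin 3))).re := by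
    simp [trYA, Complex.re_sum]
  simp only [Fin.sum_univ_two, Fin.sum_univ_three] at m0
  have m1 : ((trYA σ) ((1:Fin 3),(2:Fin 3)) ((1:Fin 3),(2:Fin 3))).re
      = ∑ y : Fin 2, ∑ a0 : Fin 3, ∑ a1 : Fin 3, (σ (y,a0,(1:Fin 3),a1,(2:Fin 3)) (y,a0,(1:Fin 3),a1,(2:Fin 3))).re := by
    simp [trYA, Complex.re_sum]
  simp only [Fin.sum_univ_two, Fin.sum_univ_three] at m1
  have m2 : ((trYA σ) ((2:Fin 3),(2:Fin 3)) ((2:Fin 3),(2:Fin 3))).re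
      = ∑ y : Fin 2, ∑ a0 : Fin 3, ∑ a1 : Fin 3, (σ (y,a0,(2:Fin 3),a1,(2:Fin 3)) (y,a0,(2:Fin 3),a1,(2:Fin 3))).re := by
    simp [trYA, Complex.re_sum]
  simp only [Fin.sum_univ_two, Fin.sum_univ_three] at m2
  have nn0 := diag_re_nonneg hσ (((0:Fin 2),(0:Fin 3),(0:Fin 3),(0:Fin 3),(2:Fin 3)))
  have nn1 := diag_re_nonneg hσ (((0:Fin 2),(0:Fin 3),(0:Fin 3),(1:Fin 3),(2:Fin 3)))
  have nn2 := diag_re_nonneg hσ (((0:Fin 2),(0:Fin 3),(0:Fin 3),(2:Fin 3),(2:Fin 3)))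
  have nn3 := diag_re_nonneg hσ (((0:Fin 2),(1:Fin 3),(0:Fin 3),(0:Fin 3),(2:Fin 3)))
  have nn4 := diag_re_nonneg hσ (((0:Fin 2),(1:Fin 3),(0:Fin 3),(1:Fin 3),(2:Fin 3)))
  have nn5 := diag_re_nonneg hσ (((0:Fin 2),(1:Fin 3),(0:Fin 3),(2:Fin 3),(2:Fin 3)))
  have nn6 := diag_re_nonneg hσ (((0:Fin 2),(2:Fin 3),(0:Fin 3),(0:Fin 3),(2:Fin 3)))
  have nn7 := diag_re_nonneg hσ (((0:Fin 2),(2:Fin 3),(0:Fin 3),(1:Fin 3),(2:Fin 3)))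
  have nn8 := diag_re_nonneg hσ (((0:Fin 2),(2:Fin 3),(0:Fin 3),(2:Fin 3),(2:Fin 3)))
  have nn9 := diag_re_nonneg hσ (((1:Fin 2),(0:Fin 3),(0:Fin 3),(0:Fin 3),(2:Fin 3)))
  have nn10 := diag_re_nonneg hσ (((1:Fin 2),(0:Fin 3),(0:Fin 3),(1:Fin 3),(2:Fin 3)))
  have nn11 := diag_re_nonneg hσ (((1:Fin 2),(0:Fin 3),(0:Fin 3),(2:Fin 3),(2:Fin 3)))
  have nn12 := diag_re_nonneg hσ (((1:Fin 2),(1:Fin 3),(0:Fin 3),(0:Fin 3),(2:Fin 3)))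
  have nn13 := diag_re_nonneg hσ (((1:Fin 2),(1:Fin 3),(0:Fin 3),(1:Fin 3),(2:Fin 3)))
  have nn14 := diag_re_nonneg hσ (((1:Fin 2),(1:Fin 3),(0:Fin 3),(2:Fin 3),(2:Fin 3)))
  have nn15 := diag_re_nonneg hσ (((1:Fin 2),(2:Fin 3),(0:Fin 3),(0:Fin 3),(2:Fin 3)))
  have nn16 := diag_re_nonneg hσ (((1:Fin 2),(2:Fin 3),(0:Fin 3),(1:Fin 3),(2:Fin 3)))
  have nn17 := diag_re_nonneg hσ (((1:Fin 2),(2:Fin 3),(0:Fin 3),(2:Fin 3),(2:Fin 3)))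
  have nn18 := diag_re_nonneg hσ (((0:Fin 2),(0:Fin 3),(1:Fin 3),(0:Fin 3),(2:Fin 3)))
  have nn19 := diag_re_nonneg hσ (((0:Fin 2),(0:Fin 3),(1:Fin 3),(1:Fin 3),(2:Fin 3)))
  have nn20 := diag_re_nonneg hσ (((0:Fin 2),(0:Fin 3),(1:Fin 3),(2:Fin 3),(2:Fin 3)))
  have nn21 := diag_re_nonneg hσ (((0:Fin 2),(1:Fin 3),(1:Fin 3),(0:Fin 3),(2:Fin 3)))
  have nn22 := diag_re_nonneg hσ (((0:Fin 2),(1:Fin 3),(1:Fin 3),(1:Fin 3),(2:Fin 3)))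
  have nn23 := diag_re_nonneg hσ (((0:Fin 2),(1:Fin 3),(1:Fin 3),(2:Fin 3),(2:Fin 3)))
  have nn24 := diag_re_nonneg hσ (((0:Fin 2),(2:Fin 3),(1:Fin 3),(0:Fin 3),(2:Fin 3)))
  have nn25 := diag_re_nonneg hσ (((0:Fin 2),(2:Fin 3),(1:Fin 3),(1:Fin 3),(2:Fin 3)))
  have nn26 := diag_re_nonneg hσ (((0:Fin 2),(2:Fin 3),(1:Fin 3),(2:Fin 3),(2:Fin 3)))
  have nn27 := diag_re_nonneg hσ (((1:Fin 2),(0:Fin 3),(1:Fin 3),(0:Fin 3),(2:Fin 3)))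
  have nn28 := diag_re_nonneg hσ (((1:Fin 2),(0:Fin 3),(1:Fin 3),(1:Fin 3),(2:Fin 3)))
  have nn29 := diag_re_nonneg hσ (((1:Fin 2),(0:Fin 3),(1:Fin 3),(2:Fin 3),(2:Fin 3)))
  have nn30 := diag_re_nonneg hσ (((1:Fin 2),(1:Fin 3),(1:Fin 3),(0:Fin 3),(2:Fin 3)))
  have nn31 := diag_re_nonneg hσ (((1:Fin 2),(1:Fin 3),(1:Fin 3),(1:Fin 3),(2:Fin 3)))
  have nn32 := diag_re_nonneg hσ (((1:Fin 2),(1:Fin 3),(1:Fin 3),(2:Fin 3),(2:Fin 3)))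
  have nn33 := diag_re_nonneg hσ (((1:Fin 2),(2:Fin 3),(1:Fin 3),(0:Fin 3),(2:Fin 3)))
  have nn34 := diag_re_nonneg hσ (((1:Fin 2),(2:Fin 3),(1:Fin 3),(1:Fin 3),(2:Fin 3)))
  have nn35 := diag_re_nonneg hσ (((1:Fin 2),(2:Fin 3),(1:Fin 3),(2:Fin 3),(2:Fin 3)))
  have nn36 := diag_re_nonneg hσ (((0:Fin 2),(0:Fin 3),(2:Fin 3),(0:Fin 3),(2:Fin 3)))
  have nn37 := diag_re_nonneg hσ (((0:Fin 2),(0:Fin 3),(2:Fin 3),(1:Fin 3),(2:Fin 3)))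
  have nn38 := diag_re_nonneg hσ (((0:Fin 2),(0:Fin 3),(2:Fin 3),(2:Fin 3),(2:Fin 3)))
  have nn39 := diag_re_nonneg hσ (((0:Fin 2),(1:Fin 3),(2:Fin 3),(0:Fin 3),(2:Fin 3)))
  have nn40 := diag_re_nonneg hσ (((0:Fin 2),(1:Fin 3),(2:Fin 3),(1:Fin 3),(2:Fin 3)))
  have nn41 := diag_re_nonneg hσ (((0:Fin 2),(1:Fin 3),(2:Fin 3),(2:Fin 3),(2:Fin 3)))
  have nn42 := diag_re_nonneg hσ (((0:Fin 2),(2:Fin 3),(2:Fin 3),(0:Fin 3),(2:Fin 3)))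
  have nn43 := diag_re_nonneg hσ (((0:Fin 2),(2:Fin 3),(2:Fin 3),(1:Fin 3),(2:Fin 3)))
  have nn44 := diag_re_nonneg hσ (((0:Fin 2),(2:Fin 3),(2:Fin 3),(2:Fin 3),(2:Fin 3)))
  have nn45 := diag_re_nonneg hσ (((1:Fin 2),(0:Fin 3),(2:Fin 3),(0:Fin 3),(2:Fin 3)))
  have nn46 := diag_re_nonneg hσ (((1:Fin 2),(0:Fin 3),(2:Fin 3),(1:Fin 3),(2:Fin 3)))
  have nn47 := diag_re_nonneg hσ (((1:Fin 2),(0:Fin 3),(2:Fin 3),(2:Fin 3),(2:Fin 3)))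
  have nn48 := diag_re_nonneg hσ (((1:Fin 2),(1:Fin 3),(2:Fin 3),(0:Fin 3),(2:Fin 3)))
  have nn49 := diag_re_nonneg hσ (((1:Fin 2),(1:Fin 3),(2:Fin 3),(1:Fin 3),(2:Fin 3)))
  have nn50 := diag_re_nonneg hσ (((1:Fin 2),(1:Fin 3),(2:Fin 3),(2:Fin 3),(2:Fin 3)))
  have nn51 := diag_re_nonneg hσ (((1:Fin 2),(2:Fin 3),(2:Fin 3),(0:Fin 3),(2:Fin 3)))
  have nn52 := diag_re_nonneg hσ (((1:Fin 2),(2:Fin 3),(2:Fin 3),(1:Fin 3),(2:Fin 3)))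
  have nn53 := diag_re_nonneg hσ (((1:Fin 2),(2:Fin 3),(2:Fin 3),(2:Fin 3),(2:Fin 3)))
  linarith

lemma WCF_bound1 {σ : Mat I5} (hσ : σ.PosSemidef) :
    (hs σ P1w).re ≤ (1/2)*(1+23163/10000)*(((trYA σ) ((2:Fin 3),(0:Fin 3)) ((2:Fin 3),(0:Fin 3))).re + ((trYA σ) ((2:Fin 3),(1:Fin 3)) ((2:Fin 3),(1:Fin 3))).re) + (1/2)*(1+10000/23163)*((trYA σ) ((2:Fin 3),(2:Fin 3)) ((2:Fin 3),(2:Fin 3))).re := by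
  have e1 : hs σ P1w = ∑ u : Fin 2, ∑ c : Fin 3, B2 σ (v1 u c) (v1 u c) := by
    rw [P1w_eq, hs_sum]
    refine Finset.sum_congr rfl fun u _ => ?_
    rw [hs_sum]
    exact Finset.sum_congr rfl fun c _ => hs_herm_outer hσ.1 _
  have e2 : (hs σ P1w).re = ∑ u : Fin 2, ∑ c : Fin 3, (B2 σ (v1 u c) (v1 u c)).re := by
    rw [e1]; simp [Complex.re_sum]
  rw [e2]
  simp only [Fin.sum_univ_two, Fin.sum_univ_three]
  have hb00 : (B2 σ (v1 (0:Fin 2) (0:Fin 3)) (v1 (0:Fin 2) (0:Fin 3))).re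
      ≤ (1/2)*(1+23163/10000)*(σ ((0:Fin 2),(0:Fin 3),(2:Fin 3),(0:Fin 3),(0:Fin 3)) ((0:Fin 2),(0:Fin 3),(2:Fin 3),(0:Fin 3),(0:Fin 3))).re + (1/2)*(1+10000/23163)*(σ ((0:Fin 2),(0:Fin 3),(2:Fin 3),(2:Fin 3),(2:Fin 3)) ((0:Fin 2),(0:Fin 3),(2:Fin 3),(2:Fin 3),(2:Fin 3))).re := by
    rw [v1_eq]
    have := pair_form_bound hσ ((0:Fin 2),(0:Fin 3),(2:Fin 3),(0:Fin 3),(0:Fin 3)) ((0:Fin 2),(0:Fin 3),(2:Fin 3),(2:Fin 3),(2:Fin 3)) (show (0:ℝ) < 23163/10000 by norm_num)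
    simp only [f23_zero, f23_one] at *
    convert this using 3 <;> norm_num
  have hb01 : (B2 σ (v1 (0:Fin 2) (1:Fin 3)) (v1 (0:Fin 2) (1:Fin 3))).re
      ≤ (1/2)*(1+23163/10000)*(σ ((0:Fin 2),(1:Fin 3),(2:Fin 3),(0:Fin 3),(0:Fin 3)) ((0:Fin 2),(1:Fin 3),(2:Fin 3),(0:Fin 3),(0:Fin 3))).re + (1/2)*(1+10000/23163)*(σ ((0:Fin 2),(1:Fin 3),(2:Fin 3),(2:Fin 3),(2:Fin 3)) ((0:Fin 2),(1:Fin 3),(2:Fin 3),(2:Fin 3),(2:Fin 3))).re := by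
    rw [v1_eq]
    have := pair_form_bound hσ ((0:Fin 2),(1:Fin 3),(2:Fin 3),(0:Fin 3),(0:Fin 3)) ((0:Fin 2),(1:Fin 3),(2:Fin 3),(2:Fin 3),(2:Fin 3)) (show (0:ℝ) < 23163/10000 by norm_num)
    simp only [f23_zero, f23_one] at *
    convert this using 3 <;> norm_num
  have hb02 : (B2 σ (v1 (0:Fin 2) (2:Fin 3)) (v1 (0:Fin 2) (2:Fin 3))).re
      ≤ (1/2)*(1+23163/10000)*(σ ((0:Fin 2),(2:Fin 3),(2:Fin 3),(0:Fin 3),(0:Fin 3)) ((0:Fin 2),(2:Fin 3),(2:Fin 3),(0:Fin 3),(0:Fin 3))).re + (1/2)*(1+10000/23163)*(σ ((0:Fin 2),(2:Fin 3),(2:Fin 3),(2:Fin 3),(2:Fin 3)) ((0:Fin 2),(2:Fin 3),(2:Fin 3),(2:Fin 3),(2:Fin 3))).re := by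
    rw [v1_eq]
    have := pair_form_bound hσ ((0:Fin 2),(2:Fin 3),(2:Fin 3),(0:Fin 3),(0:Fin 3)) ((0:Fin 2),(2:Fin 3),(2:Fin 3),(2:Fin 3),(2:Fin 3)) (show (0:ℝ) < 23163/10000 by norm_num)
    simp only [f23_zero, f23_one] at *
    convert this using 3 <;> norm_num
  have hb10 : (B2 σ (v1 (1:Fin 2) (0:Fin 3)) (v1 (1:Fin 2) (0:Fin 3))).re
      ≤ (1/2)*(1+23163/10000)*(σ ((1:Fin 2),(0:Fin 3),(2:Fin 3),(1:Fin 3),(1:Fin 3)) ((1:Fin 2),(0:Fin 3),(2:Fin 3),(1:Fin 3),(1:Fin 3))).re + (1/2)*(1+10000/23163)*(σ ((1:Fin 2),(0:Fin 3),(2:Fin 3),(2:Fin 3),(2:Fin 3)) ((1:Fin 2),(0:Fin 3),(2:Fin 3),(2:Fin 3),(2:Fin 3))).re := by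
    rw [v1_eq]
    have := pair_form_bound hσ ((1:Fin 2),(0:Fin 3),(2:Fin 3),(1:Fin 3),(1:Fin 3)) ((1:Fin 2),(0:Fin 3),(2:Fin 3),(2:Fin 3),(2:Fin 3)) (show (0:ℝ) < 23163/10000 by norm_num)
    simp only [f23_zero, f23_one] at *
    convert this using 3 <;> norm_num
  have hb11 : (B2 σ (v1 (1:Fin 2) (1:Fin 3)) (v1 (1:Fin 2) (1:Fin 3))).re
      ≤ (1/2)*(1+23163/10000)*(σ ((1:Fin 2),(1:Fin 3),(2:Fin 3),(1:Fin 3),(1:Fin 3)) ((1:Fin 2),(1:Fin 3),(2:Fin 3),(1:Fin 3),(1:Fin 3))).re + (1/2)*(1+10000/23163)*(σ ((1:Fin 2),(1:Fin 3),(2:Fin 3),(2:Fin 3),(2:Fin 3)) ((1:Fin 2),(1:Fin 3),(2:Fin 3),(2:Fin 3),(2:Fin 3))).re := by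
    rw [v1_eq]
    have := pair_form_bound hσ ((1:Fin 2),(1:Fin 3),(2:Fin 3),(1:Fin 3),(1:Fin 3)) ((1:Fin 2),(1:Fin 3),(2:Fin 3),(2:Fin 3),(2:Fin 3)) (show (0:ℝ) < 23163/10000 by norm_num)
    simp only [f23_zero, f23_one] at *
    convert this using 3 <;> norm_num
  have hb12 : (B2 σ (v1 (1:Fin 2) (2:Fin 3)) (v1 (1:Fin 2) (2:Fin 3))).re
      ≤ (1/2)*(1+23163/10000)*(σ ((1:Fin 2),(2:Fin 3),(2:Fin 3),(1:Fin 3),(1:Fin 3)) ((1:Fin 2),(2:Fin 3),(2:Fin 3),(1:Fin 3),(1:Fin 3))).re + (1/2)*(1+10000/23163)*(σ ((1:Fin 2),(2:Fin 3),(2:Fin 3),(2:Fin 3),(2:Fin 3)) ((1:Fin 2),(2:Fin 3),(2:Fin 3),(2:Fin 3),(2:Fin 3))).re := by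
    rw [v1_eq]
    have := pair_form_bound hσ ((1:Fin 2),(2:Fin 3),(2:Fin 3),(1:Fin 3),(1:Fin 3)) ((1:Fin 2),(2:Fin 3),(2:Fin 3),(2:Fin 3),(2:Fin 3)) (show (0:ℝ) < 23163/10000 by norm_num)
    simp only [f23_zero, f23_one] at *
    convert this using 3 <;> norm_num
  have m0 : ((trYA σ) ((2:Fin 3),(0:Fin 3)) ((2:Fin 3),(0:Fin 3))).re
      = ∑ y : Fin 2, ∑ a0 : Fin 3, ∑ a1 : Fin 3, (σ (y,a0,(2:Fin 3),a1,(0:Fin 3)) (y,a0,(2:Fin 3),a1,(0:Fin 3))).re := by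
    simp [trYA, Complex.re_sum]
  simp only [Fin.sum_univ_two, Fin.sum_univ_three] at m0
  have m1 : ((trYA σ) ((2:Fin 3),(1:Fin 3)) ((2:Fin 3),(1:Fin 3))).re
      = ∑ y : Fin 2, ∑ a0 : Fin 3, ∑ a1 : Fin 3, (σ (y,a0,(2:Fin 3),a1,(1:Fin 3)) (y,a0,(2:Fin 3),a1,(1:Fin 3))).re := by
    simp [trYA, Complex.re_sum]
  simp only [Fin.sum_univ_two, Fin.sum_univ_three] at m1
  have m2 : ((trYA σ) ((2:Fin 3),(2:Fin 3)) ((2:Fin 3),(2:Fin 3))).re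
      = ∑ y : Fin 2, ∑ a0 : Fin 3, ∑ a1 : Fin 3, (σ (y,a0,(2:Fin 3),a1,(2:Fin 3)) (y,a0,(2:Fin 3),a1,(2:Fin 3))).re := by
    simp [trYA, Complex.re_sum]
  simp only [Fin.sum_univ_two, Fin.sum_univ_three] at m2
  have nn0 := diag_re_nonneg hσ (((0:Fin 2),(0:Fin 3),(2:Fin 3),(0:Fin 3),(0:Fin 3)))
  have nn1 := diag_re_nonneg hσ (((0:Fin 2),(0:Fin 3),(2:Fin 3),(1:Fin 3),(0:Fin 3)))
  have nn2 := diag_re_nonneg hσ (((0:Fin 2),(0:Fin 3),(2:Fin 3),(2:Fin 3),(0:Fin 3)))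
  have nn3 := diag_re_nonneg hσ (((0:Fin 2),(1:Fin 3),(2:Fin 3),(0:Fin 3),(0:Fin 3)))
  have nn4 := diag_re_nonneg hσ (((0:Fin 2),(1:Fin 3),(2:Fin 3),(1:Fin 3),(0:Fin 3)))
  have nn5 := diag_re_nonneg hσ (((0:Fin 2),(1:Fin 3),(2:Fin 3),(2:Fin 3),(0:Fin 3)))
  have nn6 := diag_re_nonneg hσ (((0:Fin 2),(2:Fin 3),(2:Fin 3),(0:Fin 3),(0:Fin 3)))
  have nn7 := diag_re_nonneg hσ (((0:Fin 2),(2:Fin 3),(2:Fin 3),(1:Fin 3),(0:Fin 3)))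
  have nn8 := diag_re_nonneg hσ (((0:Fin 2),(2:Fin 3),(2:Fin 3),(2:Fin 3),(0:Fin 3)))
  have nn9 := diag_re_nonneg hσ (((1:Fin 2),(0:Fin 3),(2:Fin 3),(0:Fin 3),(0:Fin 3)))
  have nn10 := diag_re_nonneg hσ (((1:Fin 2),(0:Fin 3),(2:Fin 3),(1:Fin 3),(0:Fin 3)))
  have nn11 := diag_re_nonneg hσ (((1:Fin 2),(0:Fin 3),(2:Fin 3),(2:Fin 3),(0:Fin 3)))
  have nn12 := diag_re_nonneg hσ (((1:Fin 2),(1:Fin 3),(2:Fin 3),(0:Fin 3),(0:Fin 3)))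
  have nn13 := diag_re_nonneg hσ (((1:Fin 2),(1:Fin 3),(2:Fin 3),(1:Fin 3),(0:Fin 3)))
  have nn14 := diag_re_nonneg hσ (((1:Fin 2),(1:Fin 3),(2:Fin 3),(2:Fin 3),(0:Fin 3)))
  have nn15 := diag_re_nonneg hσ (((1:Fin 2),(2:Fin 3),(2:Fin 3),(0:Fin 3),(0:Fin 3)))
  have nn16 := diag_re_nonneg hσ (((1:Fin 2),(2:Fin 3),(2:Fin 3),(1:Fin 3),(0:Fin 3)))
  have nn17 := diag_re_nonneg hσ (((1:Fin 2),(2:Fin 3),(2:Fin 3),(2:Fin 3),(0:Fin 3)))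
  have nn18 := diag_re_nonneg hσ (((0:Fin 2),(0:Fin 3),(2:Fin 3),(0:Fin 3),(1:Fin 3)))
  have nn19 := diag_re_nonneg hσ (((0:Fin 2),(0:Fin 3),(2:Fin 3),(1:Fin 3),(1:Fin 3)))
  have nn20 := diag_re_nonneg hσ (((0:Fin 2),(0:Fin 3),(2:Fin 3),(2:Fin 3),(1:Fin 3)))
  have nn21 := diag_re_nonneg hσ (((0:Fin 2),(1:Fin 3),(2:Fin 3),(0:Fin 3),(1:Fin 3)))
  have nn22 := diag_re_nonneg hσ (((0:Fin 2),(1:Fin 3),(2:Fin 3),(1:Fin 3),(1:Fin 3)))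
  have nn23 := diag_re_nonneg hσ (((0:Fin 2),(1:Fin 3),(2:Fin 3),(2:Fin 3),(1:Fin 3)))
  have nn24 := diag_re_nonneg hσ (((0:Fin 2),(2:Fin 3),(2:Fin 3),(0:Fin 3),(1:Fin 3)))
  have nn25 := diag_re_nonneg hσ (((0:Fin 2),(2:Fin 3),(2:Fin 3),(1:Fin 3),(1:Fin 3)))
  have nn26 := diag_re_nonneg hσ (((0:Fin 2),(2:Fin 3),(2:Fin 3),(2:Fin 3),(1:Fin 3)))
  have nn27 := diag_re_nonneg hσ (((1:Fin 2),(0:Fin 3),(2:Fin 3),(0:Fin 3),(1:Fin 3)))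
  have nn28 := diag_re_nonneg hσ (((1:Fin 2),(0:Fin 3),(2:Fin 3),(1:Fin 3),(1:Fin 3)))
  have nn29 := diag_re_nonneg hσ (((1:Fin 2),(0:Fin 3),(2:Fin 3),(2:Fin 3),(1:Fin 3)))
  have nn30 := diag_re_nonneg hσ (((1:Fin 2),(1:Fin 3),(2:Fin 3),(0:Fin 3),(1:Fin 3)))
  have nn31 := diag_re_nonneg hσ (((1:Fin 2),(1:Fin 3),(2:Fin 3),(1:Fin 3),(1:Fin 3)))
  have nn32 := diag_re_nonneg hσ (((1:Fin 2),(1:Fin 3),(2:Fin 3),(2:Fin 3),(1:Fin 3)))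
  have nn33 := diag_re_nonneg hσ (((1:Fin 2),(2:Fin 3),(2:Fin 3),(0:Fin 3),(1:Fin 3)))
  have nn34 := diag_re_nonneg hσ (((1:Fin 2),(2:Fin 3),(2:Fin 3),(1:Fin 3),(1:Fin 3)))
  have nn35 := diag_re_nonneg hσ (((1:Fin 2),(2:Fin 3),(2:Fin 3),(2:Fin 3),(1:Fin 3)))
  have nn36 := diag_re_nonneg hσ (((0:Fin 2),(0:Fin 3),(2:Fin 3),(0:Fin 3),(2:Fin 3)))
  have nn37 := diag_re_nonneg hσ (((0:Fin 2),(0:Fin 3),(2:Fin 3),(1:Fin 3),(2:Fin 3)))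
  have nn38 := diag_re_nonneg hσ (((0:Fin 2),(0:Fin 3),(2:Fin 3),(2:Fin 3),(2:Fin 3)))
  have nn39 := diag_re_nonneg hσ (((0:Fin 2),(1:Fin 3),(2:Fin 3),(0:Fin 3),(2:Fin 3)))
  have nn40 := diag_re_nonneg hσ (((0:Fin 2),(1:Fin 3),(2:Fin 3),(1:Fin 3),(2:Fin 3)))
  have nn41 := diag_re_nonneg hσ (((0:Fin 2),(1:Fin 3),(2:Fin 3),(2:Fin 3),(2:Fin 3)))
  have nn42 := diag_re_nonneg hσ (((0:Fin 2),(2:Fin 3),(2:Fin 3),(0:Fin 3),(2:Fin 3)))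
  have nn43 := diag_re_nonneg hσ (((0:Fin 2),(2:Fin 3),(2:Fin 3),(1:Fin 3),(2:Fin 3)))
  have nn44 := diag_re_nonneg hσ (((0:Fin 2),(2:Fin 3),(2:Fin 3),(2:Fin 3),(2:Fin 3)))
  have nn45 := diag_re_nonneg hσ (((1:Fin 2),(0:Fin 3),(2:Fin 3),(0:Fin 3),(2:Fin 3)))
  have nn46 := diag_re_nonneg hσ (((1:Fin 2),(0:Fin 3),(2:Fin 3),(1:Fin 3),(2:Fin 3)))
  have nn47 := diag_re_nonneg hσ (((1:Fin 2),(0:Fin 3),(2:Fin 3),(2:Fin 3),(2:Fin 3)))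
  have nn48 := diag_re_nonneg hσ (((1:Fin 2),(1:Fin 3),(2:Fin 3),(0:Fin 3),(2:Fin 3)))
  have nn49 := diag_re_nonneg hσ (((1:Fin 2),(1:Fin 3),(2:Fin 3),(1:Fin 3),(2:Fin 3)))
  have nn50 := diag_re_nonneg hσ (((1:Fin 2),(1:Fin 3),(2:Fin 3),(2:Fin 3),(2:Fin 3)))
  have nn51 := diag_re_nonneg hσ (((1:Fin 2),(2:Fin 3),(2:Fin 3),(0:Fin 3),(2:Fin 3)))
  have nn52 := diag_re_nonneg hσ (((1:Fin 2),(2:Fin 3),(2:Fin 3),(1:Fin 3),(2:Fin 3)))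
  have nn53 := diag_re_nonneg hσ (((1:Fin 2),(2:Fin 3),(2:Fin 3),(2:Fin 3),(2:Fin 3)))
  linarith

end BCWCF
section Upper

lemma trYA_diag_re_nonneg {σ : Mat I5} (hσ : σ.PosSemidef) (p : Fin 3 × Fin 3) :
    0 ≤ ((trYA σ) p p).re := by
  have : ((trYA σ) p p).re
      = ∑ y : Fin 2, ∑ a0 : Fin 3, ∑ a1 : Fin 3, (σ (y,a0,p.1,a1,p.2) (y,a0,p.1,a1,p.2)).re := by
    simp [trYA, Complex.re_sum]
  rw [this]
  refine Finset.sum_nonneg fun y _ => Finset.sum_nonneg fun a0 _ => Finset.sum_nonneg fun a1 _ => ?_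
  exact diag_re_nonneg hσ _

lemma re_combo (z1 z2 z3 z4 z5 : ℂ) :
    ((1/3 : ℂ) * ((1/2 : ℂ) * z1 + (1/2 : ℂ) * z2)
      + (1/3 : ℂ) * ((1/2 : ℂ) * z3 + (1/2 : ℂ) * z4)
      + (1/3 : ℂ) * z5).re
    = (1/6) * z1.re + (1/6) * z2.re + (1/6) * z3.re + (1/6) * z4.re + (1/3) * z5.re := by
  have h3 : (1/3 : ℂ) = ((1/3 : ℝ) : ℂ) := by norm_num
  have h2 : (1/2 : ℂ) = ((1/2 : ℝ) : ℂ) := by norm_num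
  rw [h3, h2]
  simp only [Complex.add_re, Complex.mul_re, Complex.ofReal_re, Complex.ofReal_im,
    zero_mul, sub_zero, Complex.add_im, Complex.mul_im, add_zero, zero_add]
  ring

lemma total_upper {σ0 σ1 : Mat (Fin 3 × Fin 3)} {σ0w σ1w : Mat I5}
    {σOT : Mat (Fin 2 × Fin 2 × Fin 2 × Fin 2)} {σB : Mat (Fin 3)}
    (hd0 : IsDensity σ0) (hd1 : IsDensity σ1) (hd0w : IsDensity σ0w) (hd1w : IsDensity σ1w)
    (hdOT : IsDensity σOT) (hdB : IsDensity σB)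
    (hm0 : ptrA σ0 = σB) (hm1 : ptrA σ1 = σB)
    (hYA : trYA σ0w = trYA σ1w) (hB1 : trB1 (trYA σ0w) = σB)
    (hOT : OTconstraint σOT σB) :
    ((1/3 : ℂ) * ((1/2 : ℂ) * hs (outer (phi 0)) σ0 + (1/2 : ℂ) * hs (outer (phi 1)) σ1)
      + (1/3 : ℂ) * ((1/2 : ℂ) * hs σ0w P0w + (1/2 : ℂ) * hs σ1w P1w)
      + (1/3 : ℂ) * hs σOT Pacc).re ≤ (0.7178 : ℝ) := by
  have hT0 := BC_bound0 hd0.1 hm0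
  have hT1 := BC_bound1 hd1.1 hm1
  have hV0 := WCF_bound0 hd0w.1
  have hV1 := WCF_bound1 hd1w.1
  rw [← hYA] at hV1
  have hW := OT_bound hdOT.1 hOT
  -- marginal identities from trB1 (trYA σ0w) = σB
  have hb : ∀ i : Fin 3, (σB i i).re
      = ((trYA σ0w) (i,0) (i,0)).re + ((trYA σ0w) (i,1) (i,1)).re
        + ((trYA σ0w) (i,2) (i,2)).re := by
    intro i
    have := congrFun (congrFun hB1 i) i
    rw [show trB1 (trYA σ0w) i i = ∑ b1, (trYA σ0w) (i,b1) (i,b1) from rfl] at this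
    rw [← this]
    simp [Fin.sum_univ_three, Complex.add_re]
  have hb0 := hb 0
  have hb1 := hb 1
  have hb2 := hb 2
  have nn : ∀ p : Fin 3 × Fin 3, 0 ≤ ((trYA σ0w) p p).re := trYA_diag_re_nonneg hd0w.1
  have nn00 := nn (0,0); have nn01 := nn (0,1); have nn02 := nn (0,2)
  have nn10 := nn (1,0); have nn11 := nn (1,1); have nn12 := nn (1,2)
  have nn20 := nn (2,0); have nn21 := nn (2,1); have nn22 := nn (2,2)
  have htr : (σB 0 0).re + (σB 1 1).re + (σB 2 2).re = 1 := by
    have := hdB.2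
    rw [show σB.trace = σB 0 0 + σB 1 1 + σB 2 2 by
      simp [Matrix.trace, Matrix.diag, Fin.sum_univ_three]] at this
    have := congrArg Complex.re this
    simpa [Complex.add_re] using this
  rw [re_combo]
  linarith [hT0, hT1, hV0, hV1, hW]

end Upper
section Witness

def sa : ℝ := Real.sqrt (1987/10000)
def sc : ℝ := Real.sqrt (6026/10000)
def st2 : ℝ := Real.sqrt (5079/20000)
def sp2 : ℝ := Real.sqrt (947/20000)

lemma hsa : sa*sa = 1987/10000 := Real.mul_self_sqrt (by norm_num)
lemma hsc : sc*sc = 6026/10000 := Real.mul_self_sqrt (by norm_num)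
lemma hst2 : st2*st2 = 5079/20000 := Real.mul_self_sqrt (by norm_num)
lemma hsp2 : sp2*sp2 = 947/20000 := Real.mul_self_sqrt (by norm_num)
lemma sa_nn : 0 ≤ sa := Real.sqrt_nonneg _
lemma sc_nn : 0 ≤ sc := Real.sqrt_nonneg _
lemma st2_nn : 0 ≤ st2 := Real.sqrt_nonneg _
lemma sp2_nn : 0 ≤ sp2 := Real.sqrt_nonneg _

def Psi0 : I5 → ℂ := fun i =>
  if i = (0,0,0,0,2) then (sa:ℂ) else if i = (1,1,1,0,2) then (sa:ℂ)
  else if i = (0,2,2,0,2) then (st2:ℂ) else if i = (1,2,2,0,2) then (st2:ℂ)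
  else if i = (0,1,2,0,0) then (sp2:ℂ) else if i = (1,0,2,0,1) then (sp2:ℂ) else 0

def Psi1 : I5 → ℂ := fun i =>
  if i = (0,0,2,0,0) then (sp2:ℂ) else if i = (1,0,2,1,1) then (sp2:ℂ)
  else if i = (0,0,2,2,2) then (st2:ℂ) else if i = (1,0,2,2,2) then (st2:ℂ)
  else if i = (0,1,0,0,2) then (sa:ℂ) else if i = (1,1,1,0,2) then (sa:ℂ) else 0

def rho9 : Mat (Fin 3 × Fin 3) := fun p q =>
  if p = q then
    (if p = (0,2) ∨ p = (1,2) then ((sa*sa : ℝ):ℂ)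
     else if p = (2,0) ∨ p = (2,1) then ((sp2*sp2 : ℝ):ℂ)
     else if p = (2,2) then ((st2*st2 + st2*st2 : ℝ):ℂ) else 0)
  else 0

lemma trYA_Psi0 : trYA (outer Psi0) = rho9 := by
  ext ⟨p1,p2⟩ ⟨q1,q2⟩
  fin_cases p1 <;> fin_cases p2 <;> fin_cases q1 <;> fin_cases q2 <;>
    simp [trYA, outer, Psi0, rho9, Fin.sum_univ_two, Fin.sum_univ_three,
      Prod.ext_iff, Complex.conj_ofReal]

end Witness
lemma csa : (sa:ℂ)*(sa:ℂ) = ((1987/10000:ℝ):ℂ) := by rw [← Complex.ofReal_mul, hsa]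
lemma csc : (sc:ℂ)*(sc:ℂ) = ((6026/10000:ℝ):ℂ) := by rw [← Complex.ofReal_mul, hsc]
lemma cst2 : (st2:ℂ)*(st2:ℂ) = ((5079/20000:ℝ):ℂ) := by rw [← Complex.ofReal_mul, hst2]
lemma csp2 : (sp2:ℂ)*(sp2:ℂ) = ((947/20000:ℝ):ℂ) := by rw [← Complex.ofReal_mul, hsp2]

lemma trYA_Psi1 : trYA (outer Psi1) = rho9 := by
  ext ⟨p1,p2⟩ ⟨q1,q2⟩
  fin_cases p1 <;> fin_cases p2 <;> fin_cases q1 <;> fin_cases q2 <;>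
    simp [trYA, outer, Psi1, rho9, Fin.sum_univ_two, Fin.sum_univ_three,
      Prod.ext_iff, Complex.conj_ofReal]

def uBC : Fin 3 × Fin 3 → ℂ := fun p =>
  if p = (0,0) then (sa:ℂ) else if p = (1,1) then (sa:ℂ) else if p = (2,2) then (sc:ℂ) else 0

def sigB : Mat (Fin 3) := fun i j =>
  if i = j then (if i = 2 then ((sc*sc : ℝ):ℂ) else ((sa*sa : ℝ):ℂ)) else 0

lemma ptrA_uBC : ptrA (outer uBC) = sigB := by
  ext i j
  fin_cases i <;> fin_cases j <;>
    simp [ptrA, outer, uBC, sigB, Fin.sum_univ_three, Prod.ext_iff, Complex.conj_ofReal]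

lemma trB1_rho9 : trB1 rho9 = sigB := by
  ext i j
  fin_cases i <;> fin_cases j <;>
    · simp [trB1, rho9, sigB, Fin.sum_univ_three, Prod.ext_iff]
      try (simp only [csa, csc, cst2, csp2]; push_cast; norm_num)

lemma sigB_psd : sigB.PosSemidef := by
  have e : sigB = outer (fun i => (sa:ℂ) * ket (0:Fin 3) i)
      + outer (fun i => (sa:ℂ) * ket (1:Fin 3) i)
      + outer (fun i => (sc:ℂ) * ket (2:Fin 3) i) := by
    ext i j
    fin_cases i <;> fin_cases j <;>
      simp [outer, ket, sigB, Complex.conj_ofReal]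
  rw [e]
  exact ((outer_posSemidef _).add (outer_posSemidef _)).add (outer_posSemidef _)

lemma sigB_trace : sigB.trace = 1 := by
  simp [Matrix.trace, Matrix.diag, sigB, Fin.sum_univ_three]
  simp only [csa, csc]
  push_cast
  norm_num

lemma uBC_trace : (outer uBC).trace = 1 := by
  rw [trace_outer]
  simp [uBC, Fintype.sum_prod_type, Fin.sum_univ_three, Prod.ext_iff, Complex.conj_ofReal]
  simp only [csa, csc]
  push_cast
  norm_num

lemma Psi0_trace : (outer Psi0).trace = 1 := by
  rw [trace_outer]
  simp [Psi0, Fintype.sum_prod_type, Fin.sum_univ_two, Fin.sum_univ_three,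
    Prod.ext_iff, Complex.conj_ofReal]
  simp only [csa, cst2, csp2]
  push_cast
  norm_num

lemma Psi1_trace : (outer Psi1).trace = 1 := by
  rw [trace_outer]
  simp [Psi1, Fintype.sum_prod_type, Fin.sum_univ_two, Fin.sum_univ_three,
    Prod.ext_iff, Complex.conj_ofReal]
  simp only [csa, cst2, csp2]
  push_cast
  norm_num
def PsiOT : (Fin 2 × Fin 2 × Fin 2 × Fin 2) → ℂ := fun i =>
  ((((if i.1 = i.2.2.1 then sa else -sa) + (if i.2.1 = i.2.2.2 then sa else -sa) + sc)/4 : ℝ) : ℂ)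

lemma trB_entry (σB : Mat (Fin 3)) (x0 x1 x0' x1' : Fin 2) :
    trB (U2 * inState σB * U2ᴴ) (x0,x1) (x0',x1')
      = ((if x0 = x0' then (1:ℂ) else -1) * σB 0 0
        + (if x1 = x1' then (1:ℂ) else -1) * σB 1 1 + σB 2 2) / 4 := by
  have e1 : ∀ b : Fin 3, (U2 * inState σB * U2ᴴ) (x0,x1,b) (x0',x1',b)
      = Udiag x0 x1 b * ((1/4:ℂ) * σB b b) * star (Udiag x0' x1' b) := by
    intro b
    rw [show U2 * inState σB * U2ᴴ = Matrix.diagonal (fun p => Udiag p.1 p.2.1 p.2.2) *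
          (inState σB * (Matrix.diagonal (fun p => Udiag p.1 p.2.1 p.2.2))ᴴ) by
        rw [U2, Matrix.mul_assoc]]
    rw [Matrix.diagonal_conjTranspose]
    simp only [Matrix.diagonal_mul, Matrix.mul_diagonal, Pi.star_apply]
    simp only [inState, outer, psiX]
    norm_num
    ring
  rw [show trB (U2 * inState σB * U2ᴴ) (x0,x1) (x0',x1')
      = ∑ b, (U2 * inState σB * U2ᴴ) (x0,x1,b) (x0',x1',b) from rfl]
  rw [Finset.sum_congr rfl (fun b _ => e1 b)]
  fin_cases x0 <;> fin_cases x0' <;> fin_cases x1 <;> fin_cases x1' <;>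
    · simp [Udiag, Fin.sum_univ_three]
      ring

lemma OTwitness : OTconstraint (outer PsiOT) sigB := by
  unfold OTconstraint
  ext ⟨x0,x1⟩ ⟨x0',x1'⟩
  rw [trB_entry]
  rw [show trG01 (outer PsiOT) (x0,x1) (x0',x1')
      = ∑ g0, ∑ g1, (outer PsiOT) (x0,x1,g0,g1) (x0',x1',g0,g1) from rfl]
  fin_cases x0 <;> fin_cases x1 <;> fin_cases x0' <;> fin_cases x1' <;>
    · simp [outer, PsiOT, Fin.sum_univ_two, Complex.conj_ofReal, sigB]
      push_cast
      ring

lemma PsiOT_trace : (outer PsiOT).trace = 1 := by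
  rw [trace_outer]
  simp [PsiOT, Fintype.sum_prod_type, Fin.sum_univ_two, Complex.conj_ofReal]
  push_cast
  ring_nf
  rw [sq, sq, csa, csc]
  push_cast
  norm_num
lemma dot_ket_scaled {α : Type} [Fintype α] [DecidableEq α] (f : α → ℂ) (k : ℂ) (P : α) :
    (∑ j, f j * (k * ket P j)) = k * f P := by
  have : ∀ j, f j * (k * ket P j) = k * (f j * ket P j) := fun j => by ring
  rw [Finset.sum_congr rfl fun j _ => this j, ← Finset.mul_sum, dot_ket]

lemma dot_ket_comb {α : Type} [Fintype α] [DecidableEq α] (f : α → ℂ) (k : ℂ) (P Q : α) :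
    (∑ j, f j * (k * ket P j + k * ket Q j)) = k * (f P + f Q) := by
  have : ∀ j, f j * (k * ket P j + k * ket Q j)
      = f j * (k * ket P j) + f j * (k * ket Q j) := fun j => by ring
  rw [Finset.sum_congr rfl fun j _ => this j, Finset.sum_add_distrib,
    dot_ket_scaled, dot_ket_scaled]
  ring

lemma hss2 : Real.sqrt 2 * Real.sqrt 2 = 2 := Real.mul_self_sqrt (by norm_num)
lemma s2_pos : 0 < Real.sqrt 2 := Real.sqrt_pos.mpr (by norm_num)

lemma valBC (y : Fin 2) : hs (outer (phi y)) (outer uBC) = ((((sa+sc)^2/2 : ℝ)):ℂ) := by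
  rw [hs_outer_left, B2_outer]
  have hS : (∑ j, star (phi y j) * uBC j) = (((sa+sc)/Real.sqrt 2 : ℝ):ℂ) := by
    rw [Finset.sum_congr rfl fun j _ => by rw [phi_star]]
    rw [phi_eq y]
    have : ∀ j, ((((Real.sqrt 2)⁻¹:ℝ):ℂ) * ket (f23 y, f23 y) j
          + (((Real.sqrt 2)⁻¹:ℝ):ℂ) * ket ((2:Fin 3),(2:Fin 3)) j) * uBC j
        = uBC j * ((((Real.sqrt 2)⁻¹:ℝ):ℂ) * ket (f23 y, f23 y) j
          + (((Real.sqrt 2)⁻¹:ℝ):ℂ) * ket ((2:Fin 3),(2:Fin 3)) j) := fun j => by ring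
    rw [Finset.sum_congr rfl fun j _ => this j, dot_ket_comb]
    fin_cases y <;>
      · simp [uBC, f23, Prod.ext_iff]
        push_cast
        rw [div_eq_mul_inv]
        ring
  rw [hS, Complex.star_def, Complex.conj_ofReal, ← Complex.ofReal_mul]
  congr 1
  rw [div_mul_div_comm]
  rw [hss2]
  ring

lemma valWCF0 : hs (outer Psi0) P0w = (((sa+st2)^2 : ℝ):ℂ) := by
  rw [hs_outer_left, P0w_eq, B2_matsum]
  rw [Finset.sum_congr rfl fun u _ => B2_matsum Finset.univ _ Psi0 Psi0]
  rw [Finset.sum_congr rfl fun u _ => Finset.sum_congr rfl fun c _ => B2_outer (v0 u c) Psi0]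
  have hS : ∀ u c, (∑ j, star (Psi0 j) * v0 u c j)
      = if c = 0 then ((((sa+st2)/Real.sqrt 2):ℝ):ℂ) else 0 := by
    intro u c
    rw [Finset.sum_congr rfl fun j _ => by rw [v0_eq u c]]
    have : ∀ j, star (Psi0 j) * ((((Real.sqrt 2)⁻¹:ℝ):ℂ) * ket (u, f23 u, f23 u, c, (2:Fin 3)) j
          + (((Real.sqrt 2)⁻¹:ℝ):ℂ) * ket (u, (2:Fin 3), (2:Fin 3), c, (2:Fin 3)) j)
        = star (Psi0 j) * ((((Real.sqrt 2)⁻¹:ℝ):ℂ) * ket (u, f23 u, f23 u, c, (2:Fin 3)) j)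
          + star (Psi0 j) * ((((Real.sqrt 2)⁻¹:ℝ):ℂ) * ket (u, (2:Fin 3), (2:Fin 3), c, (2:Fin 3)) j) :=
      fun j => by ring
    rw [Finset.sum_congr rfl fun j _ => this j, Finset.sum_add_distrib,
      dot_ket_scaled, dot_ket_scaled]
    fin_cases u <;> fin_cases c <;>
      · simp [Psi0, f23, Prod.ext_iff, Complex.conj_ofReal]
        try (push_cast; rw [div_eq_mul_inv]; ring)
  rw [Finset.sum_congr rfl fun u _ => Finset.sum_congr rfl fun c _ => by rw [hS u c]]
  simp only [Fin.sum_univ_two, Fin.sum_univ_three]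
  simp only [show ((2:Fin 3) = 0) = False from by decide,
    show ((1:Fin 3) = 0) = False from by decide, if_false, if_true]
  norm_num [apply_ite (starRingEnd ℂ), Complex.conj_ofReal]
  have hs2c : ((Real.sqrt 2 : ℝ):ℂ) * ((Real.sqrt 2 : ℝ):ℂ) = 2 := by
    rw [← Complex.ofReal_mul, hss2]; norm_num
  have hne : ((Real.sqrt 2 : ℝ):ℂ) ≠ 0 := Complex.ofReal_ne_zero.mpr (ne_of_gt s2_pos)
  field_simp
  linear_combination (-1:ℂ) * ((sa:ℂ)+(st2:ℂ))^2 * hs2c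
lemma valWCF1 : hs (outer Psi1) P1w = (((sp2+st2)^2 : ℝ):ℂ) := by
  rw [hs_outer_left, P1w_eq, B2_matsum]
  rw [Finset.sum_congr rfl fun u _ => B2_matsum Finset.univ _ Psi1 Psi1]
  rw [Finset.sum_congr rfl fun u _ => Finset.sum_congr rfl fun c _ => B2_outer (v1 u c) Psi1]
  have hS : ∀ u c, (∑ j, star (Psi1 j) * v1 u c j)
      = if c = 0 then ((((sp2+st2)/Real.sqrt 2):ℝ):ℂ) else 0 := by
    intro u c
    rw [Finset.sum_congr rfl fun j _ => by rw [v1_eq u c]]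
    have : ∀ j, star (Psi1 j) * ((((Real.sqrt 2)⁻¹:ℝ):ℂ) * ket (u, c, (2:Fin 3), f23 u, f23 u) j
          + (((Real.sqrt 2)⁻¹:ℝ):ℂ) * ket (u, c, (2:Fin 3), (2:Fin 3), (2:Fin 3)) j)
        = star (Psi1 j) * ((((Real.sqrt 2)⁻¹:ℝ):ℂ) * ket (u, c, (2:Fin 3), f23 u, f23 u) j)
          + star (Psi1 j) * ((((Real.sqrt 2)⁻¹:ℝ):ℂ) * ket (u, c, (2:Fin 3), (2:Fin 3), (2:Fin 3)) j) :=
      fun j => by ring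
    rw [Finset.sum_congr rfl fun j _ => this j, Finset.sum_add_distrib,
      dot_ket_scaled, dot_ket_scaled]
    fin_cases u <;> fin_cases c <;>
      · simp [Psi1, f23, Prod.ext_iff, Complex.conj_ofReal]
        try (push_cast; rw [div_eq_mul_inv]; ring)
  rw [Finset.sum_congr rfl fun u _ => Finset.sum_congr rfl fun c _ => by rw [hS u c]]
  simp only [Fin.sum_univ_two, Fin.sum_univ_three]
  simp only [show ((2:Fin 3) = 0) = False from by decide,
    show ((1:Fin 3) = 0) = False from by decide, if_false, if_true]
  norm_num [apply_ite (starRingEnd ℂ), Complex.conj_ofReal]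
  have hs2c : ((Real.sqrt 2 : ℝ):ℂ) * ((Real.sqrt 2 : ℝ):ℂ) = 2 := by
    rw [← Complex.ofReal_mul, hss2]; norm_num
  have hne : ((Real.sqrt 2 : ℝ):ℂ) ≠ 0 := Complex.ofReal_ne_zero.mpr (ne_of_gt s2_pos)
  field_simp
  linear_combination (-1:ℂ) * ((sp2:ℂ)+(st2:ℂ))^2 * hs2c

lemma wOT_ket (u0 u1 : Fin 2) :
    wOT (u0,u1) = ket ((u0,u1,u0,u1) : Fin 2 × Fin 2 × Fin 2 × Fin 2) := by
  funext ⟨x0,x1,g0,g1⟩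
  have e : ket ((u0,u1,u0,u1) : Fin 2 × Fin 2 × Fin 2 × Fin 2) (x0,x1,g0,g1)
      = ket u0 x0 * (ket u1 x1 * (ket u0 g0 * ket u1 g1)) := by
    rw [ket_pair, ket_pair, ket_pair]
  rw [show wOT (u0,u1) (x0,x1,g0,g1) = ket (u0,u1) (x0,x1) * ket (u0,u1) (g0,g1) from rfl,
    ← ket_pair u0 u1 x0 x1, ← ket_pair u0 u1 g0 g1, e]
  ring

lemma valOT : hs (outer PsiOT) Pacc = (((2*sa+sc)^2/4 : ℝ):ℂ) := by
  rw [hs_outer_left, Pacc_eq, B2_matsum]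
  rw [Finset.sum_congr rfl fun u0 _ => B2_matsum Finset.univ _ PsiOT PsiOT]
  rw [Finset.sum_congr rfl fun u0 _ => Finset.sum_congr rfl fun u1 _ =>
    B2_outer (wOT (u0,u1)) PsiOT]
  have hS : ∀ u0 u1 : Fin 2, (∑ j, star (PsiOT j) * wOT (u0,u1) j)
      = (((2*sa+sc)/4 : ℝ):ℂ) := by
    intro u0 u1
    rw [wOT_ket]
    have : ∀ j, star (PsiOT j) * ket ((u0,u1,u0,u1) : Fin 2 × Fin 2 × Fin 2 × Fin 2) j
        = (fun j => star (PsiOT j)) j * ket ((u0,u1,u0,u1) : Fin 2 × Fin 2 × Fin 2 × Fin 2) j :=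
      fun j => rfl
    rw [dot_ket (fun j => star (PsiOT j)) ((u0,u1,u0,u1) : Fin 2 × Fin 2 × Fin 2 × Fin 2)]
    simp [PsiOT, Complex.conj_ofReal]
    push_cast
    ring
  rw [Finset.sum_congr rfl fun u0 _ => Finset.sum_congr rfl fun u1 _ => by rw [hS u0 u1]]
  simp only [Fin.sum_univ_two, Complex.star_def, Complex.conj_ofReal, ← Complex.ofReal_mul]
  push_cast
  ring

lemma sqrt_prod_lb (q A C : ℝ) (hq : 0 ≤ q) (hA : 0 ≤ A) (hC : 0 ≤ C)
    (h : q^2 ≤ A * C) : q ≤ Real.sqrt A * Real.sqrt C := by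
  rw [← Real.sqrt_mul hA]
  have := Real.sqrt_le_sqrt h
  rwa [Real.sqrt_sq hq] at this

lemma low_val : (0.7177 : ℝ) ≤ (1/6) * ((sa+sc)^2/2) + (1/6) * ((sa+sc)^2/2)
    + (1/6) * ((sa+st2)^2) + (1/6) * ((sp2+st2)^2) + (1/3) * ((2*sa+sc)^2/4) := by
  have q1 : (346029/1000000 : ℝ) ≤ sa * sc := sqrt_prod_lb _ _ _ (by norm_num) (by norm_num) (by norm_num) (by norm_num)
  have q2 : (224632/1000000 : ℝ) ≤ sa * st2 := sqrt_prod_lb _ _ _ (by norm_num) (by norm_num) (by norm_num) (by norm_num)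
  have q3 : (109656/1000000 : ℝ) ≤ sp2 * st2 := sqrt_prod_lb _ _ _ (by norm_num) (by norm_num) (by norm_num) (by norm_num)
  nlinarith [hsa, hsc, hst2, hsp2, q1, q2, q3]
theorem bc_wcf_ot_switch_cheating_Alice :
    ∃ v : ℝ,
      IsLUB
        {x : ℝ | ∃ (σ0 σ1 : Mat (Fin 3 × Fin 3)) (σ0w σ1w : Mat I5)
            (σOT : Mat (Fin 2 × Fin 2 × Fin 2 × Fin 2)) (σB : Mat (Fin 3)),
          IsDensity σ0 ∧ IsDensity σ1 ∧ IsDensity σ0w ∧ IsDensity σ1w ∧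
          IsDensity σOT ∧ IsDensity σB ∧
          ptrA σ0 = σB ∧ ptrA σ1 = σB ∧
          trYA σ0w = trYA σ1w ∧ trB1 (trYA σ0w) = σB ∧
          OTconstraint σOT σB ∧
          x = ((1/3 : ℂ) * ((1/2 : ℂ) * hs (outer (phi 0)) σ0
                + (1/2 : ℂ) * hs (outer (phi 1)) σ1)
              + (1/3 : ℂ) * ((1/2 : ℂ) * hs σ0w P0w
                + (1/2 : ℂ) * hs σ1w P1w)
              + (1/3 : ℂ) * hs σOT Pacc).re}
        v
      ∧ (0.7177 : ℝ) ≤ v ∧ v ≤ (0.7178 : ℝ) ∧ v < 3/4 := by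
  classical
  set S : Set ℝ := {x : ℝ | ∃ (σ0 σ1 : Mat (Fin 3 × Fin 3)) (σ0w σ1w : Mat I5)
            (σOT : Mat (Fin 2 × Fin 2 × Fin 2 × Fin 2)) (σB : Mat (Fin 3)),
          IsDensity σ0 ∧ IsDensity σ1 ∧ IsDensity σ0w ∧ IsDensity σ1w ∧
          IsDensity σOT ∧ IsDensity σB ∧
          ptrA σ0 = σB ∧ ptrA σ1 = σB ∧
          trYA σ0w = trYA σ1w ∧ trB1 (trYA σ0w) = σB ∧
          OTconstraint σOT σB ∧
          x = ((1/3 : ℂ) * ((1/2 : ℂ) * hs (outer (phi 0)) σ0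
                + (1/2 : ℂ) * hs (outer (phi 1)) σ1)
              + (1/3 : ℂ) * ((1/2 : ℂ) * hs σ0w P0w
                + (1/2 : ℂ) * hs σ1w P1w)
              + (1/3 : ℂ) * hs σOT Pacc).re} with hSdef
  have hub : ∀ x ∈ S, x ≤ (0.7178 : ℝ) := by
    rintro x ⟨σ0, σ1, σ0w, σ1w, σOT, σB, hd0, hd1, hd0w, hd1w, hdOT, hdB,
      hm0, hm1, hYA, hB1, hOT, hx⟩
    rw [hx]
    exact total_upper hd0 hd1 hd0w hd1w hdOT hdB hm0 hm1 hYA hB1 hOT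
  have hx0 : ((1/6) * ((sa+sc)^2/2) + (1/6) * ((sa+sc)^2/2)
      + (1/6) * ((sa+st2)^2) + (1/6) * ((sp2+st2)^2) + (1/3) * ((2*sa+sc)^2/4) : ℝ) ∈ S := by
    refine ⟨outer uBC, outer uBC, outer Psi0, outer Psi1, outer PsiOT, sigB,
      ⟨outer_posSemidef _, uBC_trace⟩, ⟨outer_posSemidef _, uBC_trace⟩,
      ⟨outer_posSemidef _, Psi0_trace⟩, ⟨outer_posSemidef _, Psi1_trace⟩,
      ⟨outer_posSemidef _, PsiOT_trace⟩, ⟨sigB_psd, sigB_trace⟩,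
      ptrA_uBC, ptrA_uBC, trYA_Psi0.trans trYA_Psi1.symm,
      (by rw [trYA_Psi0]; exact trB1_rho9), OTwitness, ?_⟩
    rw [valBC 0, valBC 1, valWCF0, valWCF1, valOT, re_combo]
    simp only [Complex.ofReal_re]
  have hne : S.Nonempty := ⟨_, hx0⟩
  have hbdd : BddAbove S := ⟨0.7178, fun x hx => hub x hx⟩
  refine ⟨sSup S, isLUB_csSup hne hbdd, ?_, ?_, ?_⟩
  · exact le_trans low_val (le_csSup hbdd hx0)
  · exact csSup_le hne hub
  · have h := csSup_le hne hub
    have : (0.7178 : ℝ) < 3/4 := by norm_num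
    linarith
end
end
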